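/- arXiv:2305.11134 — 5 statements merged into one kernel-verified Lean document; each statement's English description precedes it below -/
import Mathlib

section
/- The function s ↦ u_n(s) defined by the trapezoidal recursion u_0(s) = 0 and u_n(s) = u_{n-1}(s)·(2+Δ_n s)/(2-Δ_n s) + (g_{n-1} + g_n)·Δ_n/(2-Δ_n s) admits the closed form u_n(s) = Σ_{j=1}^{n} g_j · D_j^n · ∏_{k=j+2}^{n}(2/Δ_k + s) · ∏_{k=j}^{n}(2/Δ_k - s)^{-1}, where D_j^n = 2(1/Δ_j + 1/Δ_{j+1}) for j < n and D_n^n = 1. -/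
theorem trapezoidal_recursion_closed_form
    (N : ℕ) (Δ : ℕ → ℝ) (hΔ : ∀ k, 0 < Δ k)
    (g : ℕ → ℂ) (hg0 : g 0 = 0) (s : ℂ)
    (hs : ∀ k, (2 : ℂ) - (Δ k : ℂ) * s ≠ 0)
    (u : ℕ → ℂ) (hu0 : u 0 = 0)
    (hu : ∀ n, 1 ≤ n → n ≤ N →
      u n = u (n - 1) * ((2 + (Δ n : ℂ) * s) / (2 - (Δ n : ℂ) * s))
            + (g (n - 1) + g n) * ((Δ n : ℂ) / (2 - (Δ n : ℂ) * s))) :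
    ∀ n, n ≤ N →
      u n = ∑ j ∈ Finset.Icc 1 n,
        g j * (if j < n then 2 * (1 / (Δ j : ℂ) + 1 / (Δ (j + 1) : ℂ)) else 1)
          * (∏ k ∈ Finset.Icc (j + 2) n, (2 / (Δ k : ℂ) + s))
          * (∏ k ∈ Finset.Icc j n, (2 / (Δ k : ℂ) - s))⁻¹ := by
  have hΔc : ∀ k, (Δ k : ℂ) ≠ 0 := fun k => by
    exact_mod_cast (hΔ k).ne'
  have e2 : ∀ k, (2 : ℂ) - (Δ k : ℂ) * s = (Δ k : ℂ) * ((2 : ℂ) / (Δ k : ℂ) - s) := by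
    intro k; field_simp [hΔc k]
  have e1 : ∀ k, (2 : ℂ) + (Δ k : ℂ) * s = (Δ k : ℂ) * ((2 : ℂ) / (Δ k : ℂ) + s) := by
    intro k; field_simp [hΔc k]
  have hne : ∀ k, (2 : ℂ) / (Δ k : ℂ) - s ≠ 0 := by
    intro k h
    apply hs k
    rw [e2 k, h, mul_zero]
  intro n hn
  induction n with
  | zero => simpa using hu0
  | succ n ih =>
    have hnN : n ≤ N := Nat.le_of_succ_le hn
    have IH := ih hnN
    have h1 : 1 ≤ n + 1 := by omega
    rw [hu (n+1) h1 hn]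
    simp only [Nat.add_sub_cancel]
    rw [IH]
    have hC : (2 + (Δ (n+1) : ℂ) * s) / (2 - (Δ (n+1) : ℂ) * s)
        = (2 / (Δ (n+1) : ℂ) + s) / (2 / (Δ (n+1) : ℂ) - s) := by
      rw [e1 (n+1), e2 (n+1), mul_div_mul_left _ _ (hΔc (n+1))]
    have hG : (Δ (n+1) : ℂ) / (2 - (Δ (n+1) : ℂ) * s)
        = (2 / (Δ (n+1) : ℂ) - s)⁻¹ := by
      rw [e2 (n+1), div_mul_cancel_left₀ (hΔc (n+1))]
    rw [hC, hG]
    rw [Finset.sum_Icc_succ_top h1]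
    rcases Nat.eq_zero_or_pos n with rfl | hpos
    · simp [hg0]
    · obtain ⟨m, rfl⟩ : ∃ m, n = m + 1 := ⟨n - 1, by omega⟩
      rw [Finset.sum_Icc_succ_top (by omega : 1 ≤ m + 1),
        Finset.sum_Icc_succ_top (by omega : 1 ≤ m + 1),
        add_mul, Finset.sum_mul]
      have hcongr : ∀ j ∈ Finset.Icc 1 m,
          g j * (if j < m + 1 then 2 * (1 / (Δ j : ℂ) + 1 / (Δ (j + 1) : ℂ)) else 1)
            * (∏ k ∈ Finset.Icc (j + 2) (m+1), (2 / (Δ k : ℂ) + s))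
            * (∏ k ∈ Finset.Icc j (m+1), (2 / (Δ k : ℂ) - s))⁻¹
            * ((2 / (Δ (m+1+1) : ℂ) + s) / (2 / (Δ (m+1+1) : ℂ) - s))
          = g j * (if j < m + 1 + 1 then 2 * (1 / (Δ j : ℂ) + 1 / (Δ (j + 1) : ℂ)) else 1)
            * (∏ k ∈ Finset.Icc (j + 2) (m+1+1), (2 / (Δ k : ℂ) + s))
            * (∏ k ∈ Finset.Icc j (m+1+1), (2 / (Δ k : ℂ) - s))⁻¹ := by
        intro j hj
        simp only [Finset.mem_Icc] at hj
        rw [if_pos (by omega), if_pos (by omega)]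
        rw [Finset.prod_Icc_succ_top (by omega : j + 2 ≤ m + 1 + 1),
          Finset.prod_Icc_succ_top (by omega : j ≤ m + 1 + 1)]
        rw [mul_inv, div_eq_mul_inv]
        ring
      rw [Finset.sum_congr rfl hcongr]
      rw [if_neg (by omega : ¬ (m + 1 < m + 1)), if_pos (by omega : m + 1 < m + 1 + 1),
        if_neg (by omega : ¬ (m + 1 + 1 < m + 1 + 1))]
      rw [Finset.Icc_eq_empty (by omega : ¬ (m + 1 + 2 ≤ m + 1)),
        Finset.Icc_eq_empty (by omega : ¬ (m + 1 + 2 ≤ m + 1 + 1)),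
        Finset.Icc_eq_empty (by omega : ¬ (m + 1 + 1 + 2 ≤ m + 1 + 1)),
        Finset.Icc_self (m+1+1),
        Finset.prod_Icc_succ_top (by omega : m + 1 ≤ m + 1 + 1),
        Finset.Icc_self (m+1)]
      simp only [Finset.prod_empty, Finset.prod_singleton, mul_one]
      have key : g (m+1) * ((2 / (Δ (m+1) : ℂ) - s))⁻¹
            * ((2 / (Δ (m+1+1) : ℂ) + s) / (2 / (Δ (m+1+1) : ℂ) - s))
            + (g (m+1) + g (m+1+1)) * (2 / (Δ (m+1+1) : ℂ) - s)⁻¹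
          = g (m+1) * (2 * (1 / (Δ (m+1) : ℂ) + 1 / (Δ (m+1+1) : ℂ)))
            * ((2 / (Δ (m+1) : ℂ) - s) * (2 / (Δ (m+1+1) : ℂ) - s))⁻¹
            + g (m+1+1) * (2 / (Δ (m+1+1) : ℂ) - s)⁻¹ := by
        have ha := mul_inv_cancel₀ (hne (m+1))
        have hD : (2:ℂ) * (1 / (Δ (m+1) : ℂ) + 1 / (Δ (m+1+1) : ℂ))
            = (2 / (Δ (m+1) : ℂ) - s) + (2 / (Δ (m+1+1) : ℂ) + s) := by ring
        rw [hD, mul_inv]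
        linear_combination (-(g (m+1)) * (2 / (Δ (m+1+1) : ℂ) - s)⁻¹) * ha
      linear_combination key
end

section
/- (Leibniz rule for modified divided differences) Given n+1 distinct complex points x_0, …, x_n and functions f, g defined at these points, one has ⟨x_0,…,x_n⟩(fg) = Σ_{k=0}^{n} ⟨x_0,…,x_k⟩f · ⟨x_k,…,x_n⟩g. -/
/-- Auxiliary: divided difference over points `x m, …, x (m+g)`. -/
noncomputable def ddAux (x : ℕ → ℂ) (f : ℂ → ℂ) : ℕ → ℕ → ℂ
  | 0, m => f (x m)
  | g + 1, m => (ddAux x f g m - ddAux x f g (m + 1)) / (x m - x (m + (g + 1)))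

/-- Newton divided difference `[x_m, …, x_j] f`. -/
noncomputable def dd (x : ℕ → ℂ) (f : ℂ → ℂ) (m j : ℕ) : ℂ := ddAux x f (j - m) m

/-- Modified divided difference `⟨x_m, …, x_j⟩ f`. -/
noncomputable def mdd (x : ℕ → ℂ) (f : ℂ → ℂ) (m j : ℕ) : ℂ :=
  if m < j then
    (x m + x (m + 1)) *
      dd x (fun z => f z * ∏ k ∈ Finset.Icc (m + 2) j, (x k + z)) m j
  else f (x j)

theorem ddAux_congr (x : ℕ → ℂ) (f f' : ℂ → ℂ) :
    ∀ g m, (∀ i, m ≤ i → i ≤ m + g → f (x i) = f' (x i)) →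
      ddAux x f g m = ddAux x f' g m
  | 0, m, h => by simpa [ddAux] using h m le_rfl (by omega)
  | g+1, m, h => by
    rw [ddAux, ddAux, ddAux_congr x f f' g m (fun i h1 h2 => h i h1 (by omega)),
      ddAux_congr x f f' g (m+1) (fun i h1 h2 => h i (by omega) (by omega))]

theorem ddAux_add (x : ℕ → ℂ) (f h : ℂ → ℂ) :
    ∀ g m, ddAux x (fun z => f z + h z) g m = ddAux x f g m + ddAux x h g m
  | 0, m => by simp [ddAux]
  | g+1, m => by
    rw [ddAux, ddAux, ddAux, ddAux_add x f h g m, ddAux_add x f h g (m+1)]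
    ring

theorem ddAux_smul (x : ℕ → ℂ) (c : ℂ) (f : ℂ → ℂ) :
    ∀ g m, ddAux x (fun z => c * f z) g m = c * ddAux x f g m
  | 0, m => by simp [ddAux]
  | g+1, m => by
    rw [ddAux, ddAux, ddAux_smul x c f g m, ddAux_smul x c f g (m+1)]
    ring

theorem ddAux_zero (x : ℕ → ℂ) :
    ∀ g m, ddAux x (fun _ => (0:ℂ)) g m = 0
  | 0, m => by simp [ddAux]
  | g+1, m => by rw [ddAux, ddAux_zero x g m, ddAux_zero x g (m+1)]; simp

theorem ddAux_sum {ι : Type*} (x : ℕ → ℂ) (s : Finset ι) (F : ι → ℂ → ℂ) (g m : ℕ) :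
    ddAux x (fun z => ∑ t ∈ s, F t z) g m = ∑ t ∈ s, ddAux x (F t) g m := by
  classical
  induction s using Finset.induction_on with
  | empty => simpa using ddAux_zero x g m
  | insert _ _ ha ih =>
    rename_i a s
    rw [Finset.sum_insert ha]
    have : (fun z => ∑ t ∈ insert a s, F t z) = fun z => F a z + ∑ t ∈ s, F t z := by
      funext z; rw [Finset.sum_insert ha]
    rw [this, ddAux_add, ih]

theorem ddAux_one (x : ℕ → ℂ) :
    ∀ g m, ddAux x (fun _ => (1:ℂ)) (g+1) m = 0
  | 0, m => by simp [ddAux]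
  | g+1, m => by rw [ddAux, ddAux_one x g m, ddAux_one x g (m+1)]; simp

theorem ddAux_shift (x : ℕ → ℂ) (n : ℕ)
    (hx : ∀ i j, i ≤ n → j ≤ n → i ≠ j → x i ≠ x j) (f : ℂ → ℂ) :
    ∀ g m, m + g + 1 ≤ n →
      ddAux x (fun z => z * f z) (g+1) m = x m * ddAux x f (g+1) m + ddAux x f g (m+1)
  | 0, m, hm => by
    have hne : x m - x (m+1) ≠ 0 :=
      sub_ne_zero.mpr (hx m (m+1) (by omega) (by omega) (by omega))
    simp only [ddAux, Nat.add_zero, Nat.zero_add]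
    field_simp
    ring
  | g+1, m, hm => by
    have h1 : x m - x (m + (g+2)) ≠ 0 :=
      sub_ne_zero.mpr (hx m (m + (g+2)) (by omega) (by omega) (by omega))
    have h2 : x (m+1) - x (m + (g+2)) ≠ 0 :=
      sub_ne_zero.mpr (hx (m+1) (m + (g+2)) (by omega) (by omega) (by omega))
    have e1 : m + 1 + (g + 1) = m + (g + 2) := by omega
    have hB : ddAux x f g (m+1) - ddAux x f g (m+2) =
        (x (m+1) - x (m + (g+2))) * ddAux x f (g+1) (m+1) := by
      rw [ddAux, e1]
      field_simp
    rw [show ddAux x (fun z => z * f z) (g+1+1) m =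
        (ddAux x (fun z => z * f z) (g+1) m - ddAux x (fun z => z * f z) (g+1) (m+1)) /
          (x m - x (m + (g+1+1))) from rfl,
      ddAux_shift x n hx f g m (by omega), ddAux_shift x n hx f g (m+1) (by omega),
      show ddAux x f (g+1+1) m =
        (ddAux x f (g+1) m - ddAux x f (g+1) (m+1)) / (x m - x (m + (g+1+1))) from rfl,
      show g+1+1 = g+2 from rfl, show m+1+1 = m+2 from rfl]
    simp only [show m + (g+2) = m + g + 2 from by omega] at h1 h2 hB ⊢
    field_simp
    linear_combination hB

theorem ddAux_cshift (x : ℕ → ℂ) (n : ℕ)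
    (hx : ∀ i j, i ≤ n → j ≤ n → i ≠ j → x i ≠ x j) (f : ℂ → ℂ) (c : ℂ)
    (g m : ℕ) (hm : m + g + 1 ≤ n) :
    ddAux x (fun z => (c + z) * f z) (g+1) m
      = (c + x m) * ddAux x f (g+1) m + ddAux x f g (m+1) := by
  have e : (fun z => (c + z) * f z) = fun z => c * f z + z * f z := by
    funext z; ring
  rw [e, ddAux_add, ddAux_smul, ddAux_shift x n hx f g m hm]
  ring

theorem ddAux_prod (x : ℕ → ℂ) (n : ℕ)
    (hx : ∀ i j, i ≤ n → j ≤ n → i ≠ j → x i ≠ x j) (c : ℕ → ℂ) (s : Finset ℕ) :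
    ∀ g m, s.card ≤ g → m + g + 1 ≤ n →
      ddAux x (fun z => ∏ k ∈ s, (c k + z)) (g+1) m = 0 := by
  classical
  induction s using Finset.induction_on with
  | empty =>
    intro g m _ _
    simpa using ddAux_one x g m
  | insert _ _ ha ih =>
    rename_i a s
    intro g m hcard hm
    obtain ⟨g', rfl⟩ : ∃ g', g = g' + 1 := by
      refine ⟨g - 1, ?_⟩
      have := Finset.card_insert_of_notMem ha
      omega
    have hsc : s.card ≤ g' := by
      have := Finset.card_insert_of_notMem ha
      omega
    have e : (fun z => ∏ k ∈ insert a s, (c k + z))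
        = fun z => (c a + z) * ∏ k ∈ s, (c k + z) := by
      funext z; rw [Finset.prod_insert ha]
    rw [e, ddAux_cshift x n hx _ (c a) (g'+1) m hm,
      ih (g'+1) m (by omega) hm, ih g' (m+1) hsc (by omega)]
    ring

theorem dd_shift (x : ℕ → ℂ) (n : ℕ)
    (hx : ∀ i j, i ≤ n → j ≤ n → i ≠ j → x i ≠ x j) (f : ℂ → ℂ)
    (m j : ℕ) (hmj : m < j) (hj : j ≤ n) :
    dd x (fun z => z * f z) m j = x m * dd x f m j + dd x f (m+1) j := by
  obtain ⟨d, hd⟩ : ∃ d, j - m = d + 1 := ⟨j - m - 1, by omega⟩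
  have h1 : j - (m + 1) = d := by omega
  rw [dd, dd, dd, hd, h1, ddAux_shift x n hx f d m (by omega)]

theorem dd_cshift (x : ℕ → ℂ) (n : ℕ)
    (hx : ∀ i j, i ≤ n → j ≤ n → i ≠ j → x i ≠ x j) (f : ℂ → ℂ) (c : ℂ)
    (m j : ℕ) (hmj : m < j) (hj : j ≤ n) :
    dd x (fun z => (c + z) * f z) m j = (c + x m) * dd x f m j + dd x f (m+1) j := by
  obtain ⟨d, hd⟩ : ∃ d, j - m = d + 1 := ⟨j - m - 1, by omega⟩
  have h1 : j - (m + 1) = d := by omega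
  rw [dd, dd, dd, hd, h1, ddAux_cshift x n hx f c d m (by omega)]

theorem dd_sum_mdd (x : ℕ → ℂ) (n : ℕ)
    (hx : ∀ i j, i ≤ n → j ≤ n → i ≠ j → x i ≠ x j) (h : ℂ → ℂ) :
    ∀ d m j, j = m + d → j ≤ n →
      dd x (fun z => h z * ∏ k ∈ Finset.Icc (m+1) j, (x k + z)) m j
        = ∑ i ∈ Finset.Icc m j, mdd x h i j := by
  intro d
  induction d with
  | zero =>
    intro m j hj hjn
    have hjm : m = j := by omega
    subst hjm
    have he : Finset.Icc (m+1) m = ∅ := Finset.Icc_eq_empty (by omega)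
    simp [he, dd, ddAux, mdd]
  | succ d ih =>
    intro m j hj hjn
    have hmj : m < j := by omega
    have hins : Finset.Icc (m+1) j = insert (m+1) (Finset.Icc (m+2) j) := by
      ext i
      simp only [Finset.mem_Icc, Finset.mem_insert]
      omega
    simp only [hins, Finset.prod_insert (by simp : (m+1) ∉ Finset.Icc (m+2) j)]
    rw [show (fun z => h z * ((x (m+1) + z) * ∏ k ∈ Finset.Icc (m+2) j, (x k + z)))
        = (fun z => (x (m+1) + z) * (h z * ∏ k ∈ Finset.Icc (m+2) j, (x k + z)))
        from funext fun z => by ring]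
    rw [dd_cshift x n hx _ (x (m+1)) m j hmj hjn]
    have hih := ih (m+1) j (by omega) hjn
    simp only [show m+1+1 = m+2 from rfl] at hih
    rw [hih]
    have hins2 : Finset.Icc m j = insert m (Finset.Icc (m+1) j) := by
      ext i
      simp only [Finset.mem_Icc, Finset.mem_insert]
      omega
    rw [hins2, Finset.sum_insert (by simp)]
    rw [mdd, if_pos hmj]
    ring_nf

theorem mdd_congr (x : ℕ → ℂ) (f f' : ℂ → ℂ) (m j : ℕ) (hmj : m ≤ j)
    (hval : ∀ i, m ≤ i → i ≤ j → f (x i) = f' (x i)) :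
    mdd x f m j = mdd x f' m j := by
  rcases lt_or_eq_of_le hmj with hlt | heq
  · rw [mdd, mdd, if_pos hlt, if_pos hlt, dd, dd]
    rw [ddAux_congr x _ _ (j - m) m]
    intro i h1 h2
    simp only [hval i h1 (by omega)]
  · subst heq
    rw [mdd, mdd, if_neg (by omega), if_neg (by omega), hval m le_rfl le_rfl]

theorem mdd_sum {ι : Type*} (x : ℕ → ℂ) (s : Finset ι) (F : ι → ℂ → ℂ) (m j : ℕ) :
    mdd x (fun z => ∑ t ∈ s, F t z) m j = ∑ t ∈ s, mdd x (F t) m j := by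
  by_cases hlt : m < j
  · simp only [mdd, if_pos hlt, dd]
    rw [show (fun z => (∑ t ∈ s, F t z) * ∏ k ∈ Finset.Icc (m+2) j, (x k + z))
        = (fun z => ∑ t ∈ s, (F t z * ∏ k ∈ Finset.Icc (m+2) j, (x k + z)))
        from funext fun z => Finset.sum_mul ..]
    rw [ddAux_sum, Finset.mul_sum]
  · simp only [mdd, if_neg hlt]

theorem mdd_smul (x : ℕ → ℂ) (c : ℂ) (F : ℂ → ℂ) (m j : ℕ) :
    mdd x (fun z => c * F z) m j = c * mdd x F m j := by
  by_cases hlt : m < j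
  · simp only [mdd, if_pos hlt, dd]
    rw [show (fun z => (c * F z) * ∏ k ∈ Finset.Icc (m+2) j, (x k + z))
        = (fun z => c * (F z * ∏ k ∈ Finset.Icc (m+2) j, (x k + z)))
        from funext fun z => by ring]
    rw [ddAux_smul]
    ring
  · simp only [mdd, if_neg hlt]

theorem mdd_one (x : ℕ → ℂ) (n : ℕ)
    (hx : ∀ i j, i ≤ n → j ≤ n → i ≠ j → x i ≠ x j) (m j : ℕ)
    (hmj : m < j) (hj : j ≤ n) :
    mdd x (fun _ => (1:ℂ)) m j = 0 := by
  rw [mdd, if_pos hmj]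
  simp only [one_mul]
  obtain ⟨d, hd⟩ : ∃ d, j - m = d + 1 := ⟨j - m - 1, by omega⟩
  rw [dd, hd, ddAux_prod x n hx x (Finset.Icc (m+2) j) d m ?hc (by omega)]
  · ring
  case hc =>
    rw [Nat.card_Icc]
    omega

theorem mdd_mul_X (x : ℕ → ℂ) (n : ℕ)
    (hx : ∀ i j, i ≤ n → j ≤ n → i ≠ j → x i ≠ x j) (p : ℂ → ℂ) (m j : ℕ)
    (hmj : m ≤ j) (hj : j ≤ n) :
    mdd x (fun z => z * p z) m j
      = x m * mdd x p m j + (x m + x (m+1)) * ∑ k ∈ Finset.Icc (m+1) j, mdd x p k j := by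
  rcases lt_or_eq_of_le hmj with hlt | heq
  · rw [mdd, mdd, if_pos hlt, if_pos hlt]
    rw [show (fun z => (z * p z) * ∏ k ∈ Finset.Icc (m+2) j, (x k + z))
        = (fun z => z * (p z * ∏ k ∈ Finset.Icc (m+2) j, (x k + z)))
        from funext fun z => by ring]
    rw [dd_shift x n hx _ m j hlt hj]
    have hih := dd_sum_mdd x n hx p (j - (m+1)) (m+1) j (by omega) hj
    simp only [show m+1+1 = m+2 from rfl] at hih
    rw [hih]
    ring
  · subst heq
    have he : Finset.Icc (m+1) m = ∅ := Finset.Icc_eq_empty (by omega)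
    rw [mdd, mdd, if_neg (by omega), if_neg (by omega), he]
    simp

theorem sum_triangle (a b : ℕ) (F : ℕ → ℕ → ℂ) :
    ∑ l ∈ Finset.Icc a b, ∑ k ∈ Finset.Icc l b, F l k
      = ∑ k ∈ Finset.Icc a b, ∑ l ∈ Finset.Icc a k, F l k := by
  have h1 : ∀ c : ℕ, Finset.Icc c b = Finset.Ico c (b+1) := fun c => by
    rw [Finset.Ico_add_one_right_eq_Icc]
  simp only [h1]
  rw [Finset.sum_Ico_Ico_comm a (b+1) F]
  refine Finset.sum_congr rfl fun k hk => ?_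
  rw [Finset.Ico_add_one_right_eq_Icc]

theorem mdd_key (x : ℕ → ℂ) (n : ℕ)
    (hx : ∀ i j, i ≤ n → j ≤ n → i ≠ j → x i ≠ x j) (t : ℕ) :
    ∀ (g : ℂ → ℂ) (m j : ℕ), m ≤ j → j ≤ n →
      mdd x (fun z => z ^ t * g z) m j
        = ∑ k ∈ Finset.Icc m j, mdd x (fun z => z ^ t) m k * mdd x g k j := by
  induction t with
  | zero =>
    intro g m j hmj hj
    have hins : Finset.Icc m j = insert m (Finset.Icc (m+1) j) := by
      ext i
      simp only [Finset.mem_Icc, Finset.mem_insert]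
      omega
    rw [hins, Finset.sum_insert (by simp)]
    simp only [pow_zero, one_mul]
    have h1 : mdd x (fun _ => (1:ℂ)) m m = 1 := by rw [mdd, if_neg (by omega)]
    rw [h1, one_mul]
    rw [Finset.sum_eq_zero fun k hk => ?_, add_zero]
    have hmk : m < k ∧ k ≤ j := by simpa [Finset.mem_Icc] using hk
    rw [mdd_one x n hx m k hmk.1 (le_trans hmk.2 hj), zero_mul]
  | succ t ih =>
    intro g m j hmj hj
    have e1 : mdd x (fun z => z ^ (t+1) * g z) m j
        = x m * mdd x (fun z => z ^ t * g z) m j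
          + (x m + x (m+1)) * ∑ l ∈ Finset.Icc (m+1) j, mdd x (fun z => z ^ t * g z) l j := by
      rw [show (fun z => z ^ (t+1) * g z) = (fun z => z * (z ^ t * g z))
        from funext fun z => by ring]
      exact mdd_mul_X x n hx _ m j hmj hj
    have e2 : ∑ l ∈ Finset.Icc (m+1) j, mdd x (fun z => z ^ t * g z) l j
        = ∑ l ∈ Finset.Icc (m+1) j, ∑ k ∈ Finset.Icc l j,
            mdd x (fun z => z ^ t) l k * mdd x g k j :=
      Finset.sum_congr rfl fun l hl => ih g l j (Finset.mem_Icc.mp hl).2 hj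
    have e3 : ∑ k ∈ Finset.Icc m j, mdd x (fun z => z ^ (t+1)) m k * mdd x g k j
        = ∑ k ∈ Finset.Icc m j,
            (x m * mdd x (fun z => z ^ t) m k
              + (x m + x (m+1)) * ∑ l ∈ Finset.Icc (m+1) k,
                  mdd x (fun z => z ^ t) l k) * mdd x g k j := by
      refine Finset.sum_congr rfl fun k hk => ?_
      obtain ⟨h1, h2⟩ := Finset.mem_Icc.mp hk
      rw [show (fun z : ℂ => z ^ (t+1)) = (fun z => z * z ^ t)
        from funext fun z => by ring, mdd_mul_X x n hx _ m k h1 (le_trans h2 hj)]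
    rw [e1, ih g m j hmj hj, e2, e3]
    have hswap : ∑ l ∈ Finset.Icc (m+1) j, ∑ k ∈ Finset.Icc l j,
          mdd x (fun z => z ^ t) l k * mdd x g k j
        = ∑ k ∈ Finset.Icc m j, ∑ l ∈ Finset.Icc (m+1) k,
            mdd x (fun z => z ^ t) l k * mdd x g k j := by
      rw [sum_triangle (m+1) j (fun l k => mdd x (fun z => z ^ t) l k * mdd x g k j)]
      have hins : Finset.Icc m j = insert m (Finset.Icc (m+1) j) := by
        ext i
        simp only [Finset.mem_Icc, Finset.mem_insert]
        omega
      rw [hins, Finset.sum_insert (by simp)]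
      rw [Finset.Icc_eq_empty (by omega : ¬ m + 1 ≤ m), Finset.sum_empty, zero_add]
    rw [hswap]
    simp only [add_mul, Finset.sum_add_distrib, mul_assoc, ← Finset.mul_sum, Finset.sum_mul]


/-- Leibniz rule for modified divided differences. -/
theorem mdd_leibniz (x : ℕ → ℂ) (n : ℕ)
    (hdist : ∀ i j, i ≤ n → j ≤ n → i ≠ j → x i ≠ x j)
    (f g : ℂ → ℂ) :
    mdd x (fun z => f z * g z) 0 n
      = ∑ k ∈ Finset.range (n + 1), mdd x f 0 k * mdd x g k n := by
  classical
  have hinj : Set.InjOn x (Finset.range (n+1) : Finset ℕ) := by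
    intro i hi j hj hxe
    by_contra hne
    have hi' : i ≤ n := by
      simp only [Finset.coe_range, Set.mem_Iio] at hi; omega
    have hj' : j ≤ n := by
      simp only [Finset.coe_range, Set.mem_Iio] at hj; omega
    exact hdist i j hi' hj' hne hxe
  set p := Lagrange.interpolate (Finset.range (n+1)) x (fun i => f (x i)) with hp
  have hpv : ∀ i, i ≤ n → p.eval (x i) = f (x i) := by
    intro i hi
    rw [hp]
    exact Lagrange.eval_interpolate_at_node (i := i) (fun i => f (x i)) hinj (Finset.mem_range.mpr (Nat.lt_succ_of_le hi))
  set N := p.natDegree + 1 with hN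
  have hev : ∀ z : ℂ, p.eval z = ∑ t ∈ Finset.range N, p.coeff t * z ^ t :=
    fun z => Polynomial.eval_eq_sum_range z
  have hIcc : Finset.Icc 0 n = Finset.range (n+1) := by
    ext i; simp only [Finset.mem_Icc, Finset.mem_range]; omega
  have step1 : mdd x (fun z => f z * g z) 0 n
      = mdd x (fun z => p.eval z * g z) 0 n := by
    refine mdd_congr x _ _ 0 n (by omega) fun i h1 h2 => ?_
    rw [hpv i h2]
  have efun : (fun z => p.eval z * g z)
      = (fun z => ∑ t ∈ Finset.range N, p.coeff t * (z ^ t * g z)) := by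
    funext z
    rw [hev z, Finset.sum_mul]
    exact Finset.sum_congr rfl fun t _ => by ring
  have step2 : mdd x (fun z => p.eval z * g z) 0 n
      = ∑ t ∈ Finset.range N, p.coeff t * mdd x (fun z => z ^ t * g z) 0 n := by
    rw [efun, mdd_sum]
    exact Finset.sum_congr rfl fun t _ => mdd_smul x _ _ 0 n
  have step3 : ∑ t ∈ Finset.range N, p.coeff t * mdd x (fun z => z ^ t * g z) 0 n
      = ∑ t ∈ Finset.range N, p.coeff t *
          ∑ k ∈ Finset.Icc 0 n, mdd x (fun z => z ^ t) 0 k * mdd x g k n :=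
    Finset.sum_congr rfl fun t _ => by
      rw [mdd_key x n hdist t g 0 n (by omega) le_rfl]
  have step4 : ∀ k, k ≤ n → mdd x f 0 k
      = ∑ t ∈ Finset.range N, p.coeff t * mdd x (fun z => z ^ t) 0 k := by
    intro k hk
    have h5 : mdd x f 0 k = mdd x (fun z => p.eval z) 0 k := by
      refine mdd_congr x _ _ 0 k (by omega) fun i h1 h2 => ?_
      rw [hpv i (by omega)]
    have efun2 : (fun z => p.eval z)
        = (fun z => ∑ t ∈ Finset.range N, p.coeff t * z ^ t) := funext hev
    rw [h5, efun2, mdd_sum]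
    exact Finset.sum_congr rfl fun t _ => mdd_smul x _ _ 0 k
  have step5 : ∑ k ∈ Finset.Icc 0 n, mdd x f 0 k * mdd x g k n
      = ∑ k ∈ Finset.Icc 0 n,
          (∑ t ∈ Finset.range N, p.coeff t * mdd x (fun z => z ^ t) 0 k)
            * mdd x g k n :=
    Finset.sum_congr rfl fun k hk => by
      rw [step4 k (Finset.mem_Icc.mp hk).2]
  rw [step1, step2, step3, ← hIcc, step5]
  simp only [Finset.mul_sum, Finset.sum_mul]
  rw [Finset.sum_comm]
  exact Finset.sum_congr rfl fun k _ => Finset.sum_congr rfl fun t _ => by ring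
end

section
/- (Inversion formula for trapezoidal gCQ) Let x_0,…,x_n be distinct complex points, K : ℂ → ℂ a function with K(x_i) ≠ 0 for all i, and g_0,…,g_n, φ_0,…,φ_n ∈ ℂ. If φ_m = Σ_{j=0}^{m} (−1)^{m−j+1} g_j ⟨x_j,…,x_m⟩K for all m = 0,…,n, then g_n = Σ_{ℓ=0}^{n} (−1)^{n−ℓ+1} φ_ℓ ⟨x_ℓ,…,x_n⟩K^{−1}, where K^{−1}(x) = 1/K(x). -/
open Finset Polynomial

namespace MddInv

variable (x : ℕ → ℂ)

lemma dd_self (f : ℂ → ℂ) (m : ℕ) : dd x f m m = f (x m) := by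
  simp [dd, ddAux]

lemma dd_rec (f : ℂ → ℂ) (m d : ℕ) :
    dd x f m (m + d + 1)
      = (dd x f m (m + d) - dd x f (m + 1) (m + d + 1)) / (x m - x (m + d + 1)) := by
  have h1 : m + d + 1 - m = d + 1 := by omega
  have h2 : m + d - m = d := by omega
  have h3 : m + d + 1 - (m + 1) = d := by omega
  have h4 : m + (d + 1) = m + d + 1 := by omega
  simp only [dd, h1, h2, h3]
  rw [ddAux, h4]

lemma ddAux_add (f g : ℂ → ℂ) : ∀ d m,
    ddAux x (fun z => f z + g z) d m = ddAux x f d m + ddAux x g d m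
  | 0, m => rfl
  | d + 1, m => by
    rw [ddAux, ddAux, ddAux, ddAux_add f g d, ddAux_add f g d, ← add_div]
    congr 1
    ring

lemma dd_add (f g : ℂ → ℂ) (m j : ℕ) :
    dd x (fun z => f z + g z) m j = dd x f m j + dd x g m j := ddAux_add x f g _ m

lemma ddAux_smul (c : ℂ) (f : ℂ → ℂ) : ∀ d m,
    ddAux x (fun z => c * f z) d m = c * ddAux x f d m
  | 0, m => rfl
  | d + 1, m => by
    rw [ddAux, ddAux, ddAux_smul c f d, ddAux_smul c f d]
    ring

lemma dd_smul (c : ℂ) (f : ℂ → ℂ) (m j : ℕ) :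
    dd x (fun z => c * f z) m j = c * dd x f m j := ddAux_smul x c f _ m

lemma ddAux_congr (f g : ℂ → ℂ) : ∀ d m,
    (∀ i, m ≤ i → i ≤ m + d → f (x i) = g (x i)) → ddAux x f d m = ddAux x g d m
  | 0, m, h => h m le_rfl (by omega)
  | d + 1, m, h => by
    rw [ddAux, ddAux, ddAux_congr f g d m (fun i h1 h2 => h i h1 (by omega)),
      ddAux_congr f g d (m + 1) (fun i h1 h2 => h i (by omega) (by omega))]

lemma dd_congr (f g : ℂ → ℂ) (m j : ℕ) (hmj : m ≤ j)
    (h : ∀ i, m ≤ i → i ≤ j → f (x i) = g (x i)) : dd x f m j = dd x g m j :=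
  ddAux_congr x f g _ m (fun i h1 h2 => h i h1 (by omega))

lemma ddAux_const (c : ℂ) : ∀ d m, ddAux x (fun _ => c) d m = if d = 0 then c else 0
  | 0, m => rfl
  | d + 1, m => by
    rw [ddAux, ddAux_const c d, ddAux_const c d]
    cases d <;> simp

lemma dd_const (c : ℂ) (m j : ℕ) (h : m < j) : dd x (fun _ => c) m j = 0 := by
  rw [dd, ddAux_const]
  simp [Nat.sub_eq_zero_iff_le, not_le.2 h]

variable {x} {n : ℕ} (hx : ∀ i j, i ≤ n → j ≤ n → i ≠ j → x i ≠ x j)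
include hx

lemma dd_shift (h : ℂ → ℂ) : ∀ d m, m + d + 1 ≤ n →
    dd x (fun z => (z - x m) * h z) m (m + d + 1) = dd x h (m + 1) (m + d + 1)
  | 0, m, hn => by
    simp only [Nat.add_zero]
    have hne : x m - x (m + 1) ≠ 0 :=
      sub_ne_zero.2 (hx m (m + 1) (by omega) (by omega) (by omega))
    have hr := dd_rec x (fun z => (z - x m) * h z) m 0
    simp only [Nat.add_zero] at hr
    rw [hr, dd_self, dd_self, dd_self, sub_self, zero_mul, zero_sub,
      show -((x (m + 1) - x m) * h (x (m + 1))) = (x m - x (m + 1)) * h (x (m + 1)) by ring]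
    exact mul_div_cancel_left₀ _ hne
  | d + 1, m, hn => by
    have hmn : m + (d + 1) + 1 = m + d + 2 := by omega
    rw [hmn] at hn ⊢
    have key1 : dd x (fun z => (z - x m) * h z) m (m + d + 1) = dd x h (m + 1) (m + d + 1) :=
      dd_shift h d m (by omega)
    -- second term: over points m+1 .. m+d+2
    have key2 : dd x (fun z => (z - x m) * h z) (m + 1) (m + d + 2)
        = dd x h (m + 2) (m + d + 2) + (x (m + 1) - x m) * dd x h (m + 1) (m + d + 2) := by
      have e : (fun z => (z - x m) * h z)
          = fun z => (z - x (m + 1)) * h z + (x (m + 1) - x m) * h z := by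
        funext z; ring
      rw [e, dd_add, dd_smul]
      congr 1
      have := dd_shift h d (m + 1) (by omega)
      rw [show m + 1 + d + 1 = m + d + 2 by omega, show m + 1 + 1 = m + 2 by omega] at this
      exact this
    have hrec : dd x h (m + 1) (m + d + 2)
        = (dd x h (m + 1) (m + d + 1) - dd x h (m + 2) (m + d + 2)) / (x (m + 1) - x (m + d + 2)) := by
      have := dd_rec x h (m + 1) d
      rw [show m + 1 + d + 1 = m + d + 2 by omega, show m + 1 + d = m + d + 1 by omega,
        show m + 1 + 1 = m + 2 by omega] at this
      exact this
    have hne1 : x (m + 1) - x (m + d + 2) ≠ 0 :=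
      sub_ne_zero.2 (hx (m + 1) (m + d + 2) (by omega) (by omega) (by omega))
    have hAB : dd x h (m + 1) (m + d + 1) - dd x h (m + 2) (m + d + 2)
        = (x (m + 1) - x (m + d + 2)) * dd x h (m + 1) (m + d + 2) := by
      rw [hrec, mul_div_cancel₀ _ hne1]
    have := dd_rec x (fun z => (z - x m) * h z) m (d + 1)
    rw [show m + (d + 1) + 1 = m + d + 2 by omega, show m + (d + 1) = m + d + 1 by omega] at this
    rw [this, key1, key2]
    have hne2 : x m - x (m + d + 2) ≠ 0 :=
      sub_ne_zero.2 (hx m (m + d + 2) (by omega) (by omega) (by omega))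
    rw [show dd x h (m + 1) (m + d + 1)
        - (dd x h (m + 2) (m + d + 2) + (x (m + 1) - x m) * dd x h (m + 1) (m + d + 2))
        = (x m - x (m + d + 2)) * dd x h (m + 1) (m + d + 2) by linear_combination hAB]
    exact mul_div_cancel_left₀ _ hne2

lemma dd_linmul (h : ℂ → ℂ) (c : ℂ) {m j : ℕ} (hmj : m < j) (hj : j ≤ n) :
    dd x (fun z => (c + z) * h z) m j = (c + x m) * dd x h m j + dd x h (m + 1) j := by
  obtain ⟨d, rfl⟩ : ∃ d, j = m + d + 1 := ⟨j - m - 1, by omega⟩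
  have e : (fun z => (c + z) * h z) = fun z => (c + x m) * h z + (z - x m) * h z := by
    funext z; ring
  rw [e, dd_add, dd_smul, dd_shift hx h d m hj]

lemma dd_prod_zero : ∀ d a m j, m < j → j ≤ n → m + 2 ≤ a → j + 1 ≤ a + d →
    dd x (fun z => ∏ k ∈ Icc a j, (x k + z)) m j = 0
  | 0, a, m, j, hmj, hj, ha, hd => by
    rw [Icc_eq_empty (by omega)]
    simpa using dd_const x 1 m j hmj
  | d + 1, a, m, j, hmj, hj, ha, hd => by
    rcases le_or_gt a j with haj | haj
    · have e : (fun z => ∏ k ∈ Icc a j, (x k + z))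
          = fun z => (x a + z) * ∏ k ∈ Icc (a + 1) j, (x k + z) := by
        funext z
        rw [Icc_eq_cons_Ioc haj, prod_cons, ← Finset.Icc_add_one_left_eq_Ioc]
      rw [e, dd_linmul hx _ _ hmj hj,
        dd_prod_zero d (a + 1) m j hmj hj (by omega) (by omega),
        dd_prod_zero d (a + 1) (m + 1) j (by omega) hj (by omega) (by omega)]
      ring
    · rw [Icc_eq_empty (by omega)]
      simpa using dd_const x 1 m j hmj

lemma dd_prod_one : ∀ d m, m + d ≤ n →
    dd x (fun z => ∏ k ∈ Icc (m + 1) (m + d), (x k + z)) m (m + d) = 1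
  | 0, m, hn => by
    rw [Icc_eq_empty (by omega)]
    simpa using dd_self x (fun _ => (1:ℂ)) m
  | d + 1, m, hn => by
    have e : (fun z => ∏ k ∈ Icc (m + 1) (m + d + 1), (x k + z))
        = fun z => (x (m + 1) + z) * ∏ k ∈ Icc (m + 2) (m + d + 1), (x k + z) := by
      funext z
      rw [Icc_eq_cons_Ioc (by omega), prod_cons, ← Finset.Icc_add_one_left_eq_Ioc]
      rfl
    rw [show m + (d + 1) = m + d + 1 by omega, e,
      dd_linmul hx _ _ (by omega) (by omega),
      dd_prod_zero hx (d + 2) (m + 2) m (m + d + 1) (by omega) (by omega) le_rfl (by omega)]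
    have := dd_prod_one d (m + 1) (by omega)
    rw [show m + 1 + d = m + d + 1 by omega, show m + 1 + 1 = m + 2 by omega] at this
    rw [this]
    ring

variable (x)

omit hx in
lemma mdd_of_lt (f : ℂ → ℂ) {m j : ℕ} (h : m < j) :
    mdd x f m j
      = (x m + x (m + 1)) * dd x (fun z => f z * ∏ k ∈ Icc (m + 2) j, (x k + z)) m j := by
  unfold mdd; rw [if_pos h]

omit hx in
lemma mdd_of_eq (f : ℂ → ℂ) (j : ℕ) : mdd x f j j = f (x j) := by
  unfold mdd; rw [if_neg (lt_irrefl j)]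

omit hx in
lemma mdd_congr' (f g : ℂ → ℂ) (m j : ℕ) (hmj : m ≤ j)
    (h : ∀ i, m ≤ i → i ≤ j → f (x i) = g (x i)) : mdd x f m j = mdd x g m j := by
  rcases eq_or_lt_of_le hmj with rfl | hlt
  · rw [mdd_of_eq, mdd_of_eq, h m le_rfl le_rfl]
  · rw [mdd_of_lt x f hlt, mdd_of_lt x g hlt]
    congr 1
    exact dd_congr x _ _ m j hmj fun i h1 h2 => by rw [h i h1 h2]

omit hx in
lemma mdd_add' (f g : ℂ → ℂ) (m j : ℕ) :
    mdd x (fun z => f z + g z) m j = mdd x f m j + mdd x g m j := by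
  rcases lt_or_ge m j with hlt | hle
  · rw [mdd_of_lt x _ hlt, mdd_of_lt x f hlt, mdd_of_lt x g hlt]
    have e : (fun z => (f z + g z) * ∏ k ∈ Icc (m + 2) j, (x k + z))
        = fun z => f z * ∏ k ∈ Icc (m + 2) j, (x k + z)
            + g z * ∏ k ∈ Icc (m + 2) j, (x k + z) := by funext z; ring
    rw [e, dd_add]; ring
  · have : ¬ m < j := not_lt.2 hle
    unfold mdd; rw [if_neg this, if_neg this, if_neg this]

omit hx in
lemma mdd_smul' (c : ℂ) (f : ℂ → ℂ) (m j : ℕ) :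
    mdd x (fun z => c * f z) m j = c * mdd x f m j := by
  rcases lt_or_ge m j with hlt | hle
  · rw [mdd_of_lt x _ hlt, mdd_of_lt x f hlt]
    have e : (fun z => (c * f z) * ∏ k ∈ Icc (m + 2) j, (x k + z))
        = fun z => c * (f z * ∏ k ∈ Icc (m + 2) j, (x k + z)) := by funext z; ring
    rw [e, dd_smul]; ring
  · have : ¬ m < j := not_lt.2 hle
    unfold mdd; rw [if_neg this, if_neg this]

omit hx in
lemma tri_swap (a b : ℕ) (F : ℕ → ℕ → ℂ) :
    ∑ t ∈ Icc a b, ∑ ℓ ∈ Icc t b, F t ℓ = ∑ ℓ ∈ Icc a b, ∑ t ∈ Icc a ℓ, F t ℓ := by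
  have h := Finset.sum_Ico_Ico_comm a (b + 1) F
  simpa only [Finset.Ico_add_one_right_eq_Icc] using h

variable {x}

lemma mdd_one' {m j : ℕ} (hmj : m ≤ j) (hj : j ≤ n) :
    mdd x (fun _ => (1 : ℂ)) m j = if m = j then 1 else 0 := by
  rcases eq_or_lt_of_le hmj with rfl | hlt
  · rw [mdd_of_eq, if_pos rfl]
  · rw [mdd_of_lt x _ hlt, if_neg (by omega : ¬ m = j)]
    have e : (fun z => (1 : ℂ) * ∏ k ∈ Icc (m + 2) j, (x k + z))
        = fun z => ∏ k ∈ Icc (m + 2) j, (x k + z) := by funext z; rw [one_mul]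
    rw [e, dd_prod_zero hx (j + 1) (m + 2) m j hlt hj le_rfl (by omega), mul_zero]

lemma mdd_const' (c : ℂ) {m j : ℕ} (hmj : m ≤ j) (hj : j ≤ n) :
    mdd x (fun _ => c) m j = if m = j then c else 0 := by
  have e : (fun _ : ℂ => c) = fun z => c * (fun _ : ℂ => (1:ℂ)) z := by funext z; ring
  rw [e, mdd_smul', mdd_one' hx hmj hj]
  split <;> simp

lemma dd_N (f : ℂ → ℂ) : ∀ d a, a + d ≤ n →
    dd x (fun z => f z * ∏ k ∈ Icc (a + 1) (a + d), (x k + z)) a (a + d)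
      = ∑ ℓ ∈ Icc a (a + d), mdd x f ℓ (a + d)
  | 0, a, hn => by
    simp only [Nat.add_zero]
    have e : (fun z => f z * ∏ k ∈ Icc (a + 1) a, (x k + z)) = fun z => f z := by
      funext z; rw [Icc_eq_empty (by omega), prod_empty, mul_one]
    rw [e, Icc_self, sum_singleton, mdd_of_eq]
    exact dd_self x f a
  | d + 1, a, hn => by
    rw [show a + (d + 1) = a + d + 1 by omega] at *
    have e : (fun z => f z * ∏ k ∈ Icc (a + 1) (a + d + 1), (x k + z))
        = fun z => (x (a + 1) + z) * (f z * ∏ k ∈ Icc (a + 2) (a + d + 1), (x k + z)) := by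
      funext z
      rw [Icc_eq_cons_Ioc (by omega), prod_cons, ← Finset.Icc_add_one_left_eq_Ioc]
      ring
    rw [e, dd_linmul hx _ _ (by omega) (by omega)]
    have h2 := dd_N f d (a + 1) (by omega)
    rw [show a + 1 + d = a + d + 1 by omega, show a + 1 + 1 = a + 2 by omega] at h2
    rw [h2, Icc_eq_cons_Ioc (by omega : a ≤ a + d + 1), sum_cons, ← Finset.Icc_add_one_left_eq_Ioc]
    rw [mdd_of_lt x f (by omega : a < a + d + 1)]
    ring

lemma mdd_star (f : ℂ → ℂ) {m j : ℕ} (hmj : m ≤ j) (hj : j ≤ n) :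
    mdd x (fun z => z * f z) m j
      = x m * mdd x f m j + (x m + x (m + 1)) * ∑ ℓ ∈ Icc (m + 1) j, mdd x f ℓ j := by
  rcases eq_or_lt_of_le hmj with rfl | hlt
  · rw [mdd_of_eq, mdd_of_eq, Icc_eq_empty (by omega : ¬ m + 1 ≤ m), sum_empty, mul_zero,
      add_zero]
  · obtain ⟨d, rfl⟩ : ∃ d, j = m + d + 1 := ⟨j - m - 1, by omega⟩
    rw [mdd_of_lt x _ hlt, mdd_of_lt x f hlt]
    have e : (fun z => (z * f z) * ∏ k ∈ Icc (m + 2) (m + d + 1), (x k + z))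
        = fun z => (z - x m) * (f z * ∏ k ∈ Icc (m + 2) (m + d + 1), (x k + z))
            + x m * (f z * ∏ k ∈ Icc (m + 2) (m + d + 1), (x k + z)) := by funext z; ring
    rw [e, dd_add, dd_smul, dd_shift hx _ d m hj]
    have h2 := dd_N hx f d (m + 1) (by omega)
    rw [show m + 1 + d = m + d + 1 by omega, show m + 1 + 1 = m + 2 by omega] at h2
    rw [h2]
    ring

lemma mdd_leibniz (p : ℂ[X]) : ∀ (q : ℂ[X]) (m j : ℕ), m ≤ j → j ≤ n →
    mdd x (fun z => (p * q).eval z) m j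
      = ∑ ℓ ∈ Icc m j, mdd x (fun z => p.eval z) m ℓ * mdd x (fun z => q.eval z) ℓ j := by
  induction p using Polynomial.induction_on with
  | C a =>
    intro q m j hmj hj
    have e1 : (fun z => (C a * q).eval z) = fun z => a * q.eval z := by
      funext z; simp
    have e2 : (fun z => (C a).eval z) = fun _ : ℂ => a := by funext z; simp
    rw [e1, mdd_smul', e2]
    have e3 : ∑ ℓ ∈ Icc m j, mdd x (fun _ : ℂ => a) m ℓ * mdd x (fun z => q.eval z) ℓ j
        = ∑ ℓ ∈ Icc m j, (if m = ℓ then a else 0) * mdd x (fun z => q.eval z) ℓ j :=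
      sum_congr rfl fun ℓ hℓ => by
        rw [mdd_const' hx a (mem_Icc.1 hℓ).1 (le_trans (mem_Icc.1 hℓ).2 hj)]
    rw [e3]
    simp only [ite_mul, zero_mul]
    rw [Finset.sum_ite_eq, if_pos (mem_Icc.2 ⟨le_rfl, hmj⟩)]
  | add p1 p2 ih1 ih2 =>
    intro q m j hmj hj
    have e : (fun z => ((p1 + p2) * q).eval z)
        = fun z => (p1 * q).eval z + (p2 * q).eval z := by funext z; simp [add_mul]
    have e2 : (fun z => (p1 + p2).eval z) = fun z => p1.eval z + p2.eval z := by
      funext z; simp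
    rw [e, mdd_add', ih1 q m j hmj hj, ih2 q m j hmj hj, e2, ← sum_add_distrib]
    exact sum_congr rfl fun ℓ hℓ => by rw [mdd_add', add_mul]
  | monomial k a ih =>
    intro q m j hmj hj
    have e1 : (fun z => (C a * X ^ (k + 1) * q).eval z)
        = fun z => z * (C a * X ^ k * q).eval z := by
      funext z; simp [pow_succ]; ring
    have e2 : (fun z => (C a * X ^ (k + 1)).eval z)
        = fun z => z * (C a * X ^ k).eval z := by
      funext z; simp [pow_succ]; ring
    rw [e1, mdd_star hx _ hmj hj, ih q m j hmj hj, e2]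
    set A : ℕ → ℕ → ℂ := fun t ℓ => mdd x (fun z => (C a * X ^ k).eval z) t ℓ with hA
    set B : ℕ → ℂ := fun ℓ => mdd x (fun z => q.eval z) ℓ j with hB
    have hL : ∑ t ∈ Icc (m + 1) j, mdd x (fun z => (C a * X ^ k * q).eval z) t j
        = ∑ t ∈ Icc (m + 1) j, ∑ ℓ ∈ Icc t j, A t ℓ * B ℓ :=
      sum_congr rfl fun t ht => ih q t j (mem_Icc.1 ht).2 hj
    have hR : ∑ ℓ ∈ Icc m j, mdd x (fun z => z * (C a * X ^ k).eval z) m ℓ * B ℓ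
        = ∑ ℓ ∈ Icc m j,
            (x m * A m ℓ + (x m + x (m + 1)) * ∑ t ∈ Icc (m + 1) ℓ, A t ℓ) * B ℓ :=
      sum_congr rfl fun ℓ hℓ => by
        rw [mdd_star hx _ (mem_Icc.1 hℓ).1 (le_trans (mem_Icc.1 hℓ).2 hj)]
    rw [hL, hR]
    have hswap : ∑ t ∈ Icc (m + 1) j, ∑ ℓ ∈ Icc t j, A t ℓ * B ℓ
        = ∑ ℓ ∈ Icc (m + 1) j, ∑ t ∈ Icc (m + 1) ℓ, A t ℓ * B ℓ :=
      tri_swap (m + 1) j _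
    have h1 : ∑ ℓ ∈ Icc (m + 1) j,
          (x m * A m ℓ + (x m + x (m + 1)) * ∑ t ∈ Icc (m + 1) ℓ, A t ℓ) * B ℓ
        = x m * ∑ ℓ ∈ Icc (m + 1) j, A m ℓ * B ℓ
          + (x m + x (m + 1)) * ∑ ℓ ∈ Icc (m + 1) j, ∑ t ∈ Icc (m + 1) ℓ, A t ℓ * B ℓ := by
      rw [mul_sum, mul_sum, ← sum_add_distrib]
      refine sum_congr rfl fun ℓ hℓ => ?_
      rw [← Finset.sum_mul]
      ring
    rw [hswap, Icc_eq_cons_Ioc hmj]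
    simp only [sum_cons]
    rw [← Finset.Icc_add_one_left_eq_Ioc]
    rw [h1, show Icc (m + 1) m = ∅ from Icc_eq_empty (by omega), sum_empty, mul_zero, add_zero]
    ring
  
lemma key_conv (K : ℂ → ℂ) (hK : ∀ i, i ≤ n → K (x i) ≠ 0) {m : ℕ} (hm : m ≤ n) :
    ∑ ℓ ∈ Icc m n, mdd x K m ℓ * mdd x (fun z => (K z)⁻¹) ℓ n
      = if m = n then 1 else 0 := by
  have hinj : Set.InjOn x (range (n + 1)) := by
    intro i hi j hj hij
    by_contra hne
    exact hx i j (by simpa [Nat.lt_succ_iff] using hi) (by simpa [Nat.lt_succ_iff] using hj)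
      hne hij
  set p := Lagrange.interpolate (range (n + 1)) x (fun i => K (x i)) with hp
  set q := Lagrange.interpolate (range (n + 1)) x (fun i => (K (x i))⁻¹) with hq
  have hpe : ∀ i, i ≤ n → p.eval (x i) = K (x i) := fun i hi =>
    Lagrange.eval_interpolate_at_node _ hinj (mem_range.2 (by omega))
  have hqe : ∀ i, i ≤ n → q.eval (x i) = (K (x i))⁻¹ := fun i hi =>
    Lagrange.eval_interpolate_at_node _ hinj (mem_range.2 (by omega))
  have s1 : ∑ ℓ ∈ Icc m n, mdd x K m ℓ * mdd x (fun z => (K z)⁻¹) ℓ n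
      = ∑ ℓ ∈ Icc m n, mdd x (fun z => p.eval z) m ℓ * mdd x (fun z => q.eval z) ℓ n := by
    refine sum_congr rfl fun ℓ hℓ => ?_
    have hℓ1 := (mem_Icc.1 hℓ).1
    have hℓ2 := (mem_Icc.1 hℓ).2
    rw [mdd_congr' x K (fun z => p.eval z) m ℓ hℓ1
        (fun i h1 h2 => (hpe i (le_trans h2 hℓ2)).symm),
      mdd_congr' x (fun z => (K z)⁻¹) (fun z => q.eval z) ℓ n hℓ2
        (fun i h1 h2 => (hqe i h2).symm)]
  rw [s1, ← mdd_leibniz hx p q m n hm le_rfl,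
    mdd_congr' x _ (fun _ => (1:ℂ)) m n hm (fun i h1 h2 => by
      rw [eval_mul, hpe i h2, hqe i h2, mul_inv_cancel₀ (hK i h2)]),
    mdd_one' hx hm le_rfl]

end MddInv

/-- Inversion formula for the trapezoidal gCQ. -/
theorem mdd_inversion (x : ℕ → ℂ) (n : ℕ)
    (hdist : ∀ i j, i ≤ n → j ≤ n → i ≠ j → x i ≠ x j)
    (K : ℂ → ℂ) (hK : ∀ i, i ≤ n → K (x i) ≠ 0)
    (g φ : ℕ → ℂ)
    (hφ : ∀ m, m ≤ n →
      φ m = ∑ j ∈ Finset.range (m + 1), (-1 : ℂ) ^ (m - j + 1) * g j * mdd x K j m) :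
    g n = ∑ ℓ ∈ Finset.range (n + 1),
      (-1 : ℂ) ^ (n - ℓ + 1) * φ ℓ * mdd x (fun z => (K z)⁻¹) ℓ n := by
  have step1 : ∀ ℓ ∈ Finset.range (n + 1),
      (-1 : ℂ) ^ (n - ℓ + 1) * φ ℓ * mdd x (fun z => (K z)⁻¹) ℓ n
        = ∑ j ∈ Finset.range (ℓ + 1),
            (-1 : ℂ) ^ (n - ℓ + 1) * ((-1 : ℂ) ^ (ℓ - j + 1) * g j * mdd x K j ℓ)
              * mdd x (fun z => (K z)⁻¹) ℓ n := by
    intro ℓ hℓ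
    rw [hφ ℓ (Nat.lt_succ_iff.mp (Finset.mem_range.mp hℓ)), Finset.mul_sum, Finset.sum_mul]
  rw [Finset.sum_congr rfl step1]
  simp only [Finset.range_eq_Ico]
  have hcomm := Finset.sum_Ico_Ico_comm 0 (n + 1)
    (fun j ℓ => (-1 : ℂ) ^ (n - ℓ + 1) * ((-1 : ℂ) ^ (ℓ - j + 1) * g j * mdd x K j ℓ)
      * mdd x (fun z => (K z)⁻¹) ℓ n)
  rw [← hcomm]
  have step2 : ∀ j ∈ Finset.Ico 0 (n + 1),
      ∑ ℓ ∈ Finset.Ico j (n + 1),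
          (-1 : ℂ) ^ (n - ℓ + 1) * ((-1 : ℂ) ^ (ℓ - j + 1) * g j * mdd x K j ℓ)
            * mdd x (fun z => (K z)⁻¹) ℓ n
        = if j = n then g n else 0 := by
    intro j hj
    have hjn : j ≤ n := by
      have := Finset.mem_Ico.mp hj
      omega
    have e1 : ∀ ℓ ∈ Finset.Ico j (n + 1),
        (-1 : ℂ) ^ (n - ℓ + 1) * ((-1 : ℂ) ^ (ℓ - j + 1) * g j * mdd x K j ℓ)
            * mdd x (fun z => (K z)⁻¹) ℓ n
          = (-1 : ℂ) ^ (n - j) * g j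
              * (mdd x K j ℓ * mdd x (fun z => (K z)⁻¹) ℓ n) := by
      intro ℓ hℓ
      have hb := Finset.mem_Ico.mp hℓ
      have hsgn : (-1 : ℂ) ^ (n - ℓ + 1) * (-1 : ℂ) ^ (ℓ - j + 1) = (-1 : ℂ) ^ (n - j) := by
        rw [← pow_add, show n - ℓ + 1 + (ℓ - j + 1) = (n - j) + 2 by omega, pow_add]
        norm_num
      calc (-1 : ℂ) ^ (n - ℓ + 1) * ((-1 : ℂ) ^ (ℓ - j + 1) * g j * mdd x K j ℓ)
            * mdd x (fun z => (K z)⁻¹) ℓ n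
          = ((-1 : ℂ) ^ (n - ℓ + 1) * (-1 : ℂ) ^ (ℓ - j + 1))
              * (g j * (mdd x K j ℓ * mdd x (fun z => (K z)⁻¹) ℓ n)) := by ring
        _ = (-1 : ℂ) ^ (n - j) * g j
              * (mdd x K j ℓ * mdd x (fun z => (K z)⁻¹) ℓ n) := by rw [hsgn]; ring
    rw [Finset.sum_congr rfl e1, ← Finset.mul_sum,
      show Finset.Ico j (n + 1) = Finset.Icc j n from Finset.Ico_add_one_right_eq_Icc j n,
      MddInv.key_conv hdist K hK hjn]
    rcases eq_or_ne j n with rfl | hne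
    · simp
    · simp [hne]
  rw [Finset.sum_congr rfl step2,
    Finset.sum_ite_eq' (Finset.Ico 0 (n + 1)) n (fun _ => g n),
    if_pos (Finset.mem_Ico.mpr ⟨Nat.zero_le n, Nat.lt_succ_self n⟩)]
end

section
/- Given distinct points x_0,…,x_n ∈ ℂ, define P_m^j(z) := ∏_{k=m}^{j}(x_k + z) and D_m^j(f) := [x_m,…,x_j]f. Then for all 2 ≤ ℓ ≤ j ≤ n−2, Σ_{k=ℓ}^{j} D_ℓ^k(P_2^k) · D_k^k(P_{k+1}^{k+1}) · D_k^j(P_{k+2}^n) = D_ℓ^j(P_2^n). -/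
section Aux

variable (x : ℕ → ℂ) (n : ℕ)

lemma ddAux_succ (f : ℂ → ℂ) (d m : ℕ) :
    ddAux x f (d + 1) m = (ddAux x f d m - ddAux x f d (m + 1)) / (x m - x (m + (d + 1))) := rfl

lemma ddAux_mul_sub (f : ℂ → ℂ) (d m : ℕ) (h : x m ≠ x (m + (d + 1))) :
    ddAux x f (d + 1) m * (x m - x (m + (d + 1))) = ddAux x f d m - ddAux x f d (m + 1) := by
  rw [ddAux_succ, div_mul_cancel₀]
  exact sub_ne_zero.2 h

variable (hdist : ∀ i j, i ≤ n → j ≤ n → i ≠ j → x i ≠ x j)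

include hdist in
lemma ddAux_leibniz (f g : ℂ → ℂ) :
    ∀ d m, m + d ≤ n →
      ddAux x (fun z => f z * g z) d m
        = ∑ i ∈ Finset.range (d + 1), ddAux x f i m * ddAux x g (d - i) (m + i) := by
  intro d
  induction d with
  | zero => intro m _; simp [ddAux]
  | succ d ih =>
    intro m hm
    have hc : x m - x (m + (d + 1)) ≠ 0 :=
      sub_ne_zero.2 (hdist m (m + (d + 1)) (by omega) (by omega) (by omega))
    have key : ∑ i ∈ Finset.range (d + 1 + 1),
          ddAux x f i m * ddAux x g (d + 1 - i) (m + i) * (x m - x (m + (d + 1)))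
        = (∑ i ∈ Finset.range (d + 1), ddAux x f i m * ddAux x g (d - i) (m + i))
          - ∑ i ∈ Finset.range (d + 1), ddAux x f i (m + 1) * ddAux x g (d - i) (m + 1 + i) := by
      have split : ∀ i ∈ Finset.range (d + 1 + 1),
          ddAux x f i m * ddAux x g (d + 1 - i) (m + i) * (x m - x (m + (d + 1)))
            = ddAux x f i m * ddAux x g (d + 1 - i) (m + i) * (x m - x (m + i))
              + ddAux x f i m * ddAux x g (d + 1 - i) (m + i) * (x (m + i) - x (m + (d + 1))) := by
        intro i _; ring
      rw [Finset.sum_congr rfl split, Finset.sum_add_distrib]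
      have h1 : ∑ i ∈ Finset.range (d + 1 + 1),
            ddAux x f i m * ddAux x g (d + 1 - i) (m + i) * (x m - x (m + i))
          = (∑ i ∈ Finset.range (d + 1), ddAux x f i m * ddAux x g (d - i) (m + 1 + i))
            - ∑ i ∈ Finset.range (d + 1), ddAux x f i (m + 1) * ddAux x g (d - i) (m + 1 + i) := by
        rw [Finset.sum_range_succ']
        simp only [add_zero, Nat.add_sub_cancel]
        have e1 : ∀ i ∈ Finset.range (d + 1),
            ddAux x f (i + 1) m * ddAux x g (d + 1 - (i + 1)) (m + (i + 1)) * (x m - x (m + (i + 1)))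
              = (ddAux x f i m - ddAux x f i (m + 1)) * ddAux x g (d - i) (m + 1 + i) := by
          intro i hi
          rw [Finset.mem_range] at hi
          have hne : x m ≠ x (m + (i + 1)) := hdist _ _ (by omega) (by omega) (by omega)
          have : ddAux x f (i + 1) m * ddAux x g (d + 1 - (i + 1)) (m + (i + 1)) * (x m - x (m + (i + 1)))
              = (ddAux x f (i + 1) m * (x m - x (m + (i + 1)))) * ddAux x g (d + 1 - (i + 1)) (m + (i + 1)) := by
            ring
          rw [this, ddAux_mul_sub x f i m hne]
          congr 2 <;> omega
        rw [Finset.sum_congr rfl e1]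
        simp only [sub_self, mul_zero, add_zero]
        rw [← Finset.sum_sub_distrib]
        exact Finset.sum_congr rfl fun i _ => by ring
      have h2 : ∑ i ∈ Finset.range (d + 1 + 1),
            ddAux x f i m * ddAux x g (d + 1 - i) (m + i) * (x (m + i) - x (m + (d + 1)))
          = (∑ i ∈ Finset.range (d + 1), ddAux x f i m * ddAux x g (d - i) (m + i))
            - ∑ i ∈ Finset.range (d + 1), ddAux x f i m * ddAux x g (d - i) (m + 1 + i) := by
        rw [Finset.sum_range_succ]
        have e2 : ∀ i ∈ Finset.range (d + 1),
            ddAux x f i m * ddAux x g (d + 1 - i) (m + i) * (x (m + i) - x (m + (d + 1)))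
              = ddAux x f i m * (ddAux x g (d - i) (m + i) - ddAux x g (d - i) (m + 1 + i)) := by
          intro i hi
          rw [Finset.mem_range] at hi
          have hE : d + 1 - i = (d - i) + 1 := by omega
          have hE2 : m + (d + 1) = (m + i) + ((d - i) + 1) := by omega
          have hne : x (m + i) ≠ x ((m + i) + ((d - i) + 1)) :=
            hdist _ _ (by omega) (by omega) (by omega)
          rw [hE, hE2, mul_assoc, ddAux_mul_sub x g (d - i) (m + i) hne]
          have : (m + i) + 1 = m + 1 + i := by omega
          rw [this]
        rw [Finset.sum_congr rfl e2, ← Finset.sum_sub_distrib]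
        simp only [Nat.sub_self, sub_self, mul_zero, add_zero]
        exact Finset.sum_congr rfl fun i _ => by ring
      rw [h1, h2]; ring
    rw [ddAux_succ, ih m (by omega), ih (m + 1) (by omega), div_eq_iff hc, Finset.sum_mul, key]

lemma ddAux_const (c : ℂ) : ∀ d m, 0 < d → ddAux x (fun _ => c) d m = 0 := by
  intro d
  induction d with
  | zero => omega
  | succ d ih =>
    intro m _
    rcases Nat.eq_zero_or_pos d with h | h
    · subst h; simp [ddAux]
    · rw [ddAux_succ, ih m h, ih (m + 1) h]; simp

lemma ddAux_linear_one (w : ℂ) (m : ℕ) (h : x m ≠ x (m + 1)) :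
    ddAux x (fun z => w + z) 1 m = 1 := by
  show (_ - _) / _ = (1 : ℂ)
  rw [div_eq_one_iff_eq (sub_ne_zero.2 h)]
  show w + x m - (w + x (m + 1)) = _
  ring

include hdist in
lemma ddAux_linear_big (w : ℂ) : ∀ d m, m + (d + 2) ≤ n →
    ddAux x (fun z => w + z) (d + 2) m = 0 := by
  intro d
  induction d with
  | zero =>
    intro m hm
    rw [ddAux_succ, ddAux_linear_one x w m (hdist _ _ (by omega) (by omega) (by omega)),
      ddAux_linear_one x w (m + 1) (hdist _ _ (by omega) (by omega) (by omega))]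
    simp
  | succ d ih =>
    intro m hm
    rw [ddAux_succ, ih m (by omega), ih (m + 1) (by omega)]
    simp

include hdist in
lemma ddAux_peel_right (F : ℂ → ℂ) (w : ℂ) (d m : ℕ) (h : m + d ≤ n) :
    ddAux x (fun z => F z * (w + z)) d m
      = (w + x (m + d)) * ddAux x F d m
        + (if d = 0 then 0 else ddAux x F (d - 1) m) := by
  rw [ddAux_leibniz x n hdist F (fun z => w + z) d m h]
  match d with
  | 0 => simp [ddAux]; ring
  | e + 1 =>
    rw [Finset.sum_range_succ, Finset.sum_range_succ]
    have hz : ∀ i ∈ Finset.range e,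
        ddAux x F i m * ddAux x (fun z => w + z) (e + 1 - i) (m + i) = 0 := by
      intro i hi
      rw [Finset.mem_range] at hi
      have hE : e + 1 - i = (e - 1 - i) + 2 := by omega
      rw [hE, ddAux_linear_big x n hdist w _ _ (by omega), mul_zero]
    rw [Finset.sum_congr rfl hz, Finset.sum_const_zero, zero_add]
    have h1 : e + 1 - e = 1 := by omega
    rw [h1, ddAux_linear_one x w (m + e) (hdist _ _ (by omega) (by omega) (by omega))]
    simp [ddAux]
    ring

include hdist in
lemma ddAux_peel_left (F : ℂ → ℂ) (w : ℂ) (d m : ℕ) (h : m + d ≤ n) :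
    ddAux x (fun z => (w + z) * F z) d m
      = (w + x m) * ddAux x F d m
        + (if d = 0 then 0 else ddAux x F (d - 1) (m + 1)) := by
  rw [ddAux_leibniz x n hdist (fun z => w + z) F d m h]
  match d with
  | 0 => simp [ddAux]
  | e + 1 =>
    rw [Finset.sum_range_succ', Finset.sum_range_succ']
    have hz : ∀ i ∈ Finset.range e,
        ddAux x (fun z => w + z) (i + 1 + 1) m * ddAux x F (e + 1 - (i + 1 + 1)) (m + (i + 1 + 1)) = 0 := by
      intro i hi
      rw [Finset.mem_range] at hi
      rw [ddAux_linear_big x n hdist w i m (by omega), zero_mul]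
    rw [Finset.sum_congr rfl hz, Finset.sum_const_zero, zero_add]
    rw [ddAux_linear_one x w m (hdist _ _ (by omega) (by omega) (by omega))]
    simp [ddAux]
    ring

lemma Icc_prod_split (f : ℕ → ℂ) {a b c : ℕ} (h1 : a ≤ b + 1) (h2 : b ≤ c) :
    (∏ t ∈ Finset.Icc a b, f t) * ∏ t ∈ Finset.Icc (b + 1) c, f t
      = ∏ t ∈ Finset.Icc a c, f t := by
  rw [← Finset.prod_union]
  · congr 1
    ext t
    simp only [Finset.mem_union, Finset.mem_Icc]
    omega
  · rw [Finset.disjoint_left]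
    intro t ht ht'
    simp only [Finset.mem_Icc] at ht ht'
    omega

include hdist in
lemma ddAux_prod_zero : ∀ d e a m, d < e → m + e ≤ n →
    ddAux x (fun z => ∏ t ∈ Finset.Icc (a + 1) (a + d), (x t + z)) e m = 0 := by
  intro d
  induction d with
  | zero =>
    intro e a m hde hm
    have hQ : (fun z => ∏ t ∈ Finset.Icc (a + 1) (a + 0), (x t + z)) = fun _ => (1 : ℂ) := by
      funext z
      rw [Finset.Icc_eq_empty (by omega), Finset.prod_empty]
    rw [hQ, ddAux_const x 1 e m hde]
  | succ d ih =>
    intro e a m hde hm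
    have hQ : (fun z => ∏ t ∈ Finset.Icc (a + 1) (a + (d + 1)), (x t + z))
        = fun z => (∏ t ∈ Finset.Icc (a + 1) (a + d), (x t + z)) * (x (a + d + 1) + z) := by
      funext z
      rw [show a + (d + 1) = (a + d) + 1 from rfl, Finset.prod_Icc_succ_top (by omega)]
    rw [hQ, ddAux_peel_right x n hdist _ _ e m hm, ih e a m (by omega) hm,
      if_neg (by omega), ih (e - 1) a m (by omega) (by omega)]
    simp

include hdist in
lemma ddAux_prod_diag : ∀ d a m, m + d ≤ n →
    ddAux x (fun z => ∏ t ∈ Finset.Icc (a + 1) (a + d), (x t + z)) d m = 1 := by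
  intro d
  induction d with
  | zero =>
    intro a m hm
    show ∏ t ∈ Finset.Icc (a + 1) a, (x t + x m) = 1
    rw [Finset.Icc_eq_empty (by omega), Finset.prod_empty]
  | succ d ih =>
    intro a m hm
    have hQ : (fun z => ∏ t ∈ Finset.Icc (a + 1) (a + (d + 1)), (x t + z))
        = fun z => (∏ t ∈ Finset.Icc (a + 1) (a + d), (x t + z)) * (x (a + d + 1) + z) := by
      funext z
      rw [show a + (d + 1) = (a + d) + 1 from rfl, Finset.prod_Icc_succ_top (by omega)]
    rw [hQ, ddAux_peel_right x n hdist _ _ (d + 1) m hm,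
      ddAux_prod_zero x n hdist d (d + 1) a m (by omega) hm,
      if_neg (by omega)]
    simp only [Nat.add_sub_cancel, mul_zero, zero_add]
    exact ih a m (by omega)

include hdist in
lemma ddAux_prod_sum : ∀ d a m, m + d ≤ n →
    ddAux x (fun z => ∏ t ∈ Finset.Icc (a + 1) (a + d + 1), (x t + z)) d m
      = (∑ t ∈ Finset.Icc (a + 1) (a + d + 1), x t) + ∑ i ∈ Finset.Icc m (m + d), x i := by
  intro d
  induction d with
  | zero =>
    intro a m hm
    show ∏ t ∈ Finset.Icc (a + 1) (a + 0 + 1), (x t + x m) = _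
    simp [Finset.Icc_self]
  | succ d ih =>
    intro a m hm
    have hQ : (fun z => ∏ t ∈ Finset.Icc (a + 1) (a + (d + 1) + 1), (x t + z))
        = fun z => (∏ t ∈ Finset.Icc (a + 1) (a + d + 1), (x t + z)) * (x (a + d + 2) + z) := by
      funext z
      rw [show a + (d + 1) + 1 = (a + d + 1) + 1 from by omega, Finset.prod_Icc_succ_top (by omega)]
    rw [hQ, ddAux_peel_right x n hdist _ _ (d + 1) m hm, if_neg (by omega)]
    have hdiag : ddAux x (fun z => ∏ t ∈ Finset.Icc (a + 1) (a + d + 1), (x t + z)) (d + 1) m = 1 := by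
      have := ddAux_prod_diag x n hdist (d + 1) a m hm
      rwa [show a + (d + 1) = a + d + 1 from by omega] at this
    rw [hdiag, Nat.add_sub_cancel, ih a m (by omega)]
    rw [show a + (d + 1) + 1 = (a + d + 1) + 1 from by omega,
      Finset.sum_Icc_succ_top (show a + 1 ≤ (a + d + 1) + 1 from by omega),
      show m + (d + 1) = (m + d) + 1 from rfl,
      Finset.sum_Icc_succ_top (show m ≤ (m + d) + 1 from by omega)]
    ring_nf

lemma gen_diag (a ℓ N : ℕ) (ha : a ≤ ℓ + 1) (hN : ℓ + 1 ≤ N) :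
    ∑ k ∈ Finset.Icc ℓ ℓ,
      ddAux x (fun z => ∏ t ∈ Finset.Icc a k, (x t + z)) (k - ℓ) ℓ
        * (x k + x (k + 1))
        * ddAux x (fun z => ∏ t ∈ Finset.Icc (k + 2) N, (x t + z)) (ℓ - k) k
    = ddAux x (fun z => ∏ t ∈ Finset.Icc a N, (x t + z)) (ℓ - ℓ) ℓ := by
  rw [Finset.Icc_self, Finset.sum_singleton, Nat.sub_self]
  show (∏ t ∈ Finset.Icc a ℓ, (x t + x ℓ)) * (x ℓ + x (ℓ + 1))
      * (∏ t ∈ Finset.Icc (ℓ + 2) N, (x t + x ℓ)) = ∏ t ∈ Finset.Icc a N, (x t + x ℓ)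
  rw [← Icc_prod_split (fun t => x t + x ℓ) ha (show ℓ ≤ N from by omega),
    ← Icc_prod_split (fun t => x t + x ℓ) (show ℓ + 1 ≤ (ℓ + 1) + 1 from by omega) hN,
    Finset.Icc_self, Finset.prod_singleton]
  ring

include hdist in
lemma gen_base (ℓ j : ℕ) (hlj : ℓ ≤ j) (hn : j + 1 ≤ n) :
    ∑ k ∈ Finset.Icc ℓ j,
      ddAux x (fun z => ∏ t ∈ Finset.Icc (ℓ + 1) k, (x t + z)) (k - ℓ) ℓ
        * (x k + x (k + 1))
        * ddAux x (fun z => ∏ t ∈ Finset.Icc (k + 2) (j + 1), (x t + z)) (j - k) k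
    = ddAux x (fun z => ∏ t ∈ Finset.Icc (ℓ + 1) (j + 1), (x t + z)) (j - ℓ) ℓ := by
  have hstep : ∀ k ∈ Finset.Icc ℓ j,
      ddAux x (fun z => ∏ t ∈ Finset.Icc (ℓ + 1) k, (x t + z)) (k - ℓ) ℓ
        * (x k + x (k + 1))
        * ddAux x (fun z => ∏ t ∈ Finset.Icc (k + 2) (j + 1), (x t + z)) (j - k) k
      = x k + x (k + 1) := by
    intro k hk
    rw [Finset.mem_Icc] at hk
    have hA : ddAux x (fun z => ∏ t ∈ Finset.Icc (ℓ + 1) k, (x t + z)) (k - ℓ) ℓ = 1 := by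
      have := ddAux_prod_diag x n hdist (k - ℓ) ℓ ℓ (by omega)
      rwa [show ℓ + (k - ℓ) = k from by omega] at this
    have hC : ddAux x (fun z => ∏ t ∈ Finset.Icc (k + 2) (j + 1), (x t + z)) (j - k) k = 1 := by
      have := ddAux_prod_diag x n hdist (j - k) (k + 1) k (by omega)
      rwa [show (k + 1) + 1 = k + 2 from by omega, show (k + 1) + (j - k) = j + 1 from by omega] at this
    rw [hA, hC, one_mul, mul_one]
  rw [Finset.sum_congr rfl hstep]
  have hR : ddAux x (fun z => ∏ t ∈ Finset.Icc (ℓ + 1) (j + 1), (x t + z)) (j - ℓ) ℓ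
      = (∑ t ∈ Finset.Icc (ℓ + 1) (j + 1), x t) + ∑ i ∈ Finset.Icc ℓ j, x i := by
    have := ddAux_prod_sum x n hdist (j - ℓ) ℓ ℓ (by omega)
    rwa [show ℓ + (j - ℓ) + 1 = j + 1 from by omega, show ℓ + (j - ℓ) = j from by omega] at this
  rw [hR, Finset.sum_add_distrib, add_comm]
  congr 1
  rw [← Finset.map_add_right_Icc ℓ j 1, Finset.sum_map]
  exact Finset.sum_congr rfl fun k _ => by simp

include hdist in
lemma gen : ∀ M N a ℓ j, N + j ≤ M + a → a ≤ ℓ + 1 → ℓ ≤ j → j + 1 ≤ N → N ≤ n →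
    ∑ k ∈ Finset.Icc ℓ j,
      ddAux x (fun z => ∏ t ∈ Finset.Icc a k, (x t + z)) (k - ℓ) ℓ
        * (x k + x (k + 1))
        * ddAux x (fun z => ∏ t ∈ Finset.Icc (k + 2) N, (x t + z)) (j - k) k
    = ddAux x (fun z => ∏ t ∈ Finset.Icc a N, (x t + z)) (j - ℓ) ℓ := by
  intro M
  induction M with
  | zero =>
    intro N a ℓ j h1 h2 h3 h4 h5
    have hlj : ℓ = j := by omega
    subst hlj
    exact gen_diag x a ℓ N h2 h4
  | succ M ih =>
    intro N a ℓ j h1 h2 h3 h4 h5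
    by_cases hlj : ℓ = j
    · subst hlj
      exact gen_diag x a ℓ N h2 h4
    have hlj' : ℓ < j := by omega
    by_cases hjN : j + 1 < N
    · -- right peel
      obtain ⟨N', rfl⟩ : ∃ N', N = N' + 1 := ⟨N - 1, by omega⟩
      have hstep : ∀ k ∈ Finset.Icc ℓ j,
          ddAux x (fun z => ∏ t ∈ Finset.Icc a k, (x t + z)) (k - ℓ) ℓ
            * (x k + x (k + 1))
            * ddAux x (fun z => ∏ t ∈ Finset.Icc (k + 2) (N' + 1), (x t + z)) (j - k) k
          = (x (N' + 1) + x j) *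
              (ddAux x (fun z => ∏ t ∈ Finset.Icc a k, (x t + z)) (k - ℓ) ℓ
                * (x k + x (k + 1))
                * ddAux x (fun z => ∏ t ∈ Finset.Icc (k + 2) N', (x t + z)) (j - k) k)
            + ddAux x (fun z => ∏ t ∈ Finset.Icc a k, (x t + z)) (k - ℓ) ℓ
                * (x k + x (k + 1))
                * (if k = j then 0
                   else ddAux x (fun z => ∏ t ∈ Finset.Icc (k + 2) N', (x t + z)) (j - 1 - k) k) := by
        intro k hk
        rw [Finset.mem_Icc] at hk
        have hQ : (fun z => ∏ t ∈ Finset.Icc (k + 2) (N' + 1), (x t + z))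
            = fun z => (∏ t ∈ Finset.Icc (k + 2) N', (x t + z)) * (x (N' + 1) + z) := by
          funext z
          exact Finset.prod_Icc_succ_top (by omega) _
        rw [hQ, ddAux_peel_right x n hdist _ _ (j - k) k (by omega),
          show k + (j - k) = j from by omega]
        by_cases hkj : k = j
        · subst hkj
          rw [if_pos rfl, if_pos (by omega)]
          ring
        · rw [if_neg hkj, if_neg (by omega), show j - k - 1 = j - 1 - k from by omega]
          ring
      rw [Finset.sum_congr rfl hstep, Finset.sum_add_distrib, ← Finset.mul_sum,
        ih N' a ℓ j (by omega) h2 h3 (by omega) (by omega)]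
      obtain ⟨j', rfl⟩ : ∃ j', j = j' + 1 := ⟨j - 1, by omega⟩
      rw [Finset.sum_Icc_succ_top (show ℓ ≤ j' + 1 from h3), if_pos rfl, mul_zero, add_zero]
      have hstep2 : ∀ k ∈ Finset.Icc ℓ j',
          ddAux x (fun z => ∏ t ∈ Finset.Icc a k, (x t + z)) (k - ℓ) ℓ
            * (x k + x (k + 1))
            * (if k = j' + 1 then 0
               else ddAux x (fun z => ∏ t ∈ Finset.Icc (k + 2) N', (x t + z)) (j' + 1 - 1 - k) k)
          = ddAux x (fun z => ∏ t ∈ Finset.Icc a k, (x t + z)) (k - ℓ) ℓ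
            * (x k + x (k + 1))
            * ddAux x (fun z => ∏ t ∈ Finset.Icc (k + 2) N', (x t + z)) (j' - k) k := by
        intro k hk
        rw [Finset.mem_Icc] at hk
        rw [if_neg (by omega), show j' + 1 - 1 - k = j' - k from by omega]
      rw [Finset.sum_congr rfl hstep2,
        ih N' a ℓ j' (by omega) h2 (by omega) (by omega) (by omega)]
      have hQ2 : (fun z => ∏ t ∈ Finset.Icc a (N' + 1), (x t + z))
          = fun z => (∏ t ∈ Finset.Icc a N', (x t + z)) * (x (N' + 1) + z) := by
        funext z
        exact Finset.prod_Icc_succ_top (by omega) _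
      rw [hQ2, ddAux_peel_right x n hdist _ _ (j' + 1 - ℓ) ℓ (by omega),
        show ℓ + (j' + 1 - ℓ) = j' + 1 from by omega, if_neg (by omega),
        show j' + 1 - ℓ - 1 = j' - ℓ from by omega]
    · -- j + 1 = N
      by_cases hal : a ≤ ℓ
      · -- left peel
        have hstep : ∀ k ∈ Finset.Icc ℓ j,
            ddAux x (fun z => ∏ t ∈ Finset.Icc a k, (x t + z)) (k - ℓ) ℓ
              * (x k + x (k + 1))
              * ddAux x (fun z => ∏ t ∈ Finset.Icc (k + 2) N, (x t + z)) (j - k) k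
            = (x a + x ℓ) *
                (ddAux x (fun z => ∏ t ∈ Finset.Icc (a + 1) k, (x t + z)) (k - ℓ) ℓ
                  * (x k + x (k + 1))
                  * ddAux x (fun z => ∏ t ∈ Finset.Icc (k + 2) N, (x t + z)) (j - k) k)
              + (if k = ℓ then 0
                 else ddAux x (fun z => ∏ t ∈ Finset.Icc (a + 1) k, (x t + z)) (k - (ℓ + 1)) (ℓ + 1))
                  * (x k + x (k + 1))
                  * ddAux x (fun z => ∏ t ∈ Finset.Icc (k + 2) N, (x t + z)) (j - k) k := by
          intro k hk
          rw [Finset.mem_Icc] at hk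
          have hQ : (fun z => ∏ t ∈ Finset.Icc a k, (x t + z))
              = fun z => (x a + z) * ∏ t ∈ Finset.Icc (a + 1) k, (x t + z) := by
            funext z
            rw [← Icc_prod_split (fun t => x t + z) (show a ≤ a + 1 from by omega)
              (show a ≤ k from by omega), Finset.Icc_self, Finset.prod_singleton]
          rw [hQ, ddAux_peel_left x n hdist _ _ (k - ℓ) ℓ (by omega)]
          by_cases hkl : k = ℓ
          · subst hkl
            rw [if_pos (by omega), if_pos rfl]
            ring
          · rw [if_neg (by omega), if_neg hkl, show k - ℓ - 1 = k - (ℓ + 1) from by omega]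
            ring
        rw [Finset.sum_congr rfl hstep, Finset.sum_add_distrib, ← Finset.mul_sum,
          ih N (a + 1) ℓ j (by omega) (by omega) h3 h4 h5]
        rw [Finset.Icc_eq_cons_Ioc h3, Finset.sum_cons, if_pos rfl, zero_mul, zero_mul, zero_add,
          ← Finset.Icc_add_one_left_eq_Ioc]
        have hstep2 : ∀ k ∈ Finset.Icc (ℓ + 1) j,
            (if k = ℓ then 0
             else ddAux x (fun z => ∏ t ∈ Finset.Icc (a + 1) k, (x t + z)) (k - (ℓ + 1)) (ℓ + 1))
              * (x k + x (k + 1))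
              * ddAux x (fun z => ∏ t ∈ Finset.Icc (k + 2) N, (x t + z)) (j - k) k
            = ddAux x (fun z => ∏ t ∈ Finset.Icc (a + 1) k, (x t + z)) (k - (ℓ + 1)) (ℓ + 1)
              * (x k + x (k + 1))
              * ddAux x (fun z => ∏ t ∈ Finset.Icc (k + 2) N, (x t + z)) (j - k) k := by
          intro k hk
          rw [Finset.mem_Icc] at hk
          rw [if_neg (by omega)]
        rw [Finset.sum_congr rfl hstep2,
          ih N (a + 1) (ℓ + 1) j (by omega) (by omega) (by omega) h4 h5]
        have hQ2 : (fun z => ∏ t ∈ Finset.Icc a N, (x t + z))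
            = fun z => (x a + z) * ∏ t ∈ Finset.Icc (a + 1) N, (x t + z) := by
          funext z
          rw [← Icc_prod_split (fun t => x t + z) (show a ≤ a + 1 from by omega)
            (show a ≤ N from by omega), Finset.Icc_self, Finset.prod_singleton]
        rw [hQ2, ddAux_peel_left x n hdist _ _ (j - ℓ) ℓ (by omega), if_neg (by omega),
          show j - ℓ - 1 = j - (ℓ + 1) from by omega]
      · -- base case: a = ℓ + 1, N = j + 1
        have ha : a = ℓ + 1 := by omega
        have hN : N = j + 1 := by omega
        subst ha hN
        exact gen_base x n hdist ℓ j h3 h5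

end Aux

/-- Second identity of the technical lemma for modified divided differences. -/
theorem dd_prod_identity (x : ℕ → ℂ) (n : ℕ)
    (hdist : ∀ i j, i ≤ n → j ≤ n → i ≠ j → x i ≠ x j)
    (P : ℕ → ℕ → ℂ → ℂ)
    (hP : ∀ m j z, P m j z = ∏ k ∈ Finset.Icc m j, (x k + z)) :
    ∀ ℓ j, 2 ≤ ℓ → ℓ ≤ j → j ≤ n - 2 →
      ∑ k ∈ Finset.Icc ℓ j,
        dd x (P 2 k) ℓ k * dd x (P (k + 1) (k + 1)) k k * dd x (P (k + 2) n) k j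
      = dd x (P 2 n) ℓ j := by
  intro ℓ j hℓ hℓj hjn
  have hn4 : j + 1 ≤ n := by omega
  have key := gen x n hdist (n + j) n 2 ℓ j (by omega) (by omega) hℓj hn4 le_rfl
  have hPf : ∀ m j : ℕ, P m j = fun z => ∏ k ∈ Finset.Icc m j, (x k + z) :=
    fun m j => funext (hP m j)
  have hterm : ∀ k ∈ Finset.Icc ℓ j,
      dd x (P 2 k) ℓ k * dd x (P (k + 1) (k + 1)) k k * dd x (P (k + 2) n) k j
        = ddAux x (fun z => ∏ t ∈ Finset.Icc 2 k, (x t + z)) (k - ℓ) ℓ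
            * (x k + x (k + 1))
            * ddAux x (fun z => ∏ t ∈ Finset.Icc (k + 2) n, (x t + z)) (j - k) k := by
    intro k hk
    rw [Finset.mem_Icc] at hk
    have hmid : dd x (P (k + 1) (k + 1)) k k = x k + x (k + 1) := by
      rw [dd, Nat.sub_self]
      show P (k + 1) (k + 1) (x k) = _
      rw [hP, Finset.Icc_self, Finset.prod_singleton, add_comm]
    rw [hmid, hPf, hPf, dd, dd]
  rw [Finset.sum_congr rfl hterm, key, dd, hPf]
end

section
/- (Multivariate Leibniz rule for divided differences) For functions φ_1, …, φ_N and distinct points x_{ℓ_1}, …, x_{ℓ_2}, the divided difference of the product satisfies [x_{ℓ_1},…,x_{ℓ_2}](φ_1 φ_2 ⋯ φ_N) = Σ over chains ℓ_1 = α_0 ≤ α_1 ≤ ⋯ ≤ α_N = ℓ_2 of ∏_{β=0}^{N−1} [x_{α_β},…,x_{α_{β+1}}](φ_{β+1}). -/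
lemma dd_self (x : ℕ → ℂ) (f : ℂ → ℂ) (m : ℕ) : dd x f m m = f (x m) := by
  simp [dd, ddAux]

lemma dd_succ (x : ℕ → ℂ) (f : ℂ → ℂ) {m j : ℕ} (h : m ≤ j) :
    dd x f m (j + 1) = (dd x f m j - dd x f (m + 1) (j + 1)) / (x m - x (j + 1)) := by
  have h1 : j + 1 - m = (j - m) + 1 := by omega
  have h2 : j + 1 - (m + 1) = j - m := by omega
  have h3 : m + (j - m + 1) = j + 1 := by omega
  rw [dd, dd, dd, h1, h2, ddAux, h3]

lemma dd_leibniz_aux (x : ℕ → ℂ) (f g : ℂ → ℂ) :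
    ∀ n m, (∀ i j, m ≤ i → i ≤ m + n → m ≤ j → j ≤ m + n → i ≠ j → x i ≠ x j) →
    dd x (fun z => f z * g z) m (m + n)
      = ∑ i ∈ Finset.range (n + 1), dd x f m (m + i) * dd x g (m + i) (m + n) := by
  intro n
  induction n with
  | zero => intro m _; simp [dd_self]
  | succ n ih =>
    intro m hd
    rw [show m + (n+1) = m + n + 1 from by omega] at *
    have hxmJ : x m - x (m + n + 1) ≠ 0 :=
      sub_ne_zero.mpr (hd m (m+n+1) le_rfl (by omega) (by omega) le_rfl (by omega))
    have hG : ∀ i, i ≤ n → dd x g (m + i) (m + n)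
        = (x (m+i) - x (m+n+1)) * dd x g (m+i) (m+n+1) + dd x g (m+i+1) (m+n+1) := by
      intro i hi
      have hne : x (m+i) - x (m+n+1) ≠ 0 :=
        sub_ne_zero.mpr (hd _ _ (by omega) (by omega) (by omega) (by omega) (by omega))
      have h := dd_succ x g (show m + i ≤ m + n by omega)
      rw [eq_div_iff hne] at h
      rw [show m + i + 1 = m + (i+1) from by omega] at h ⊢
      linear_combination -h
    have hF : ∀ i, i ≤ n → dd x f (m+1) (m+i+1)
        = dd x f m (m+i) - (x m - x (m+i+1)) * dd x f m (m+i+1) := by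
      intro i hi
      have hne : x m - x (m+i+1) ≠ 0 :=
        sub_ne_zero.mpr (hd _ _ le_rfl (by omega) (by omega) (by omega) (by omega))
      have h := dd_succ x f (show m ≤ m + i by omega)
      rw [eq_div_iff hne] at h
      linear_combination h
    have hA := ih m (fun i j h1 h2 h3 h4 h5 => hd i j h1 (by omega) h3 (by omega) h5)
    have hB' := ih (m+1) (fun i j h1 h2 h3 h4 h5 =>
      hd i j (by omega) (by omega) (by omega) (by omega) h5)
    rw [show m + 1 + n = m + n + 1 from by omega] at hB'
    rw [dd_succ x _ (show m ≤ m + n by omega), hA, hB', div_eq_iff hxmJ]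
    have e2 : ∑ i ∈ Finset.range (n + 1), dd x f (m+1) (m+1+i) * dd x g (m+1+i) (m+n+1)
        = ∑ i ∈ Finset.range (n + 1),
            (dd x f m (m+i) * dd x g (m+i+1) (m+n+1)
              - (x m - x (m+i+1)) * (dd x f m (m+i+1) * dd x g (m+i+1) (m+n+1))) := by
      refine Finset.sum_congr rfl fun i hi => ?_
      rw [show m + 1 + i = m + i + 1 from by omega, hF i (Nat.lt_succ_iff.mp (Finset.mem_range.mp hi))]
      ring
    have e1 : ∑ i ∈ Finset.range (n + 1), dd x f m (m+i) * dd x g (m+i) (m+n)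
        = ∑ i ∈ Finset.range (n + 1),
            ((x (m+i) - x (m+n+1)) * (dd x f m (m+i) * dd x g (m+i) (m+n+1))
              + dd x f m (m+i) * dd x g (m+i+1) (m+n+1)) := by
      refine Finset.sum_congr rfl fun i hi => ?_
      rw [hG i (Nat.lt_succ_iff.mp (Finset.mem_range.mp hi))]
      ring
    rw [e1, e2, Finset.sum_add_distrib, Finset.sum_sub_distrib]
    have e3 : ∑ i ∈ Finset.range (n + 1),
          (x m - x (m+i+1)) * (dd x f m (m+i+1) * dd x g (m+i+1) (m+n+1))
        = ∑ i ∈ Finset.range (n + 2),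
            (x m - x (m+i)) * (dd x f m (m+i) * dd x g (m+i) (m+n+1)) := by
      rw [Finset.sum_range_succ' _ (n+1)]
      simp only [add_zero, Nat.add_zero, sub_self, zero_mul]
      exact Finset.sum_congr rfl fun i _ => by rw [show m+(i+1) = m+i+1 from by omega]
    have e4 : ∑ i ∈ Finset.range (n + 1),
          (x (m+i) - x (m+n+1)) * (dd x f m (m+i) * dd x g (m+i) (m+n+1))
        = ∑ i ∈ Finset.range (n + 2),
            (x (m+i) - x (m+n+1)) * (dd x f m (m+i) * dd x g (m+i) (m+n+1)) := by
      rw [Finset.sum_range_succ _ (n+1), show m+(n+1) = m+n+1 from by omega]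
      simp
    rw [e3, e4]
    have final : (∑ i ∈ Finset.range (n+2),
          (x (m+i) - x (m+n+1)) * (dd x f m (m+i) * dd x g (m+i) (m+n+1)))
        + (∑ i ∈ Finset.range (n+2),
          (x m - x (m+i)) * (dd x f m (m+i) * dd x g (m+i) (m+n+1)))
        = (∑ i ∈ Finset.range (n+1+1), dd x f m (m+i) * dd x g (m+i) (m+n+1))
            * (x m - x (m+n+1)) := by
      rw [Finset.sum_mul, ← Finset.sum_add_distrib]
      refine Finset.sum_congr (by norm_num) fun i hi => by ring
    linear_combination final

lemma dd_leibniz (x : ℕ → ℂ) (f g : ℂ → ℂ) {m j : ℕ} (h : m ≤ j)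
    (hd : ∀ i k, m ≤ i → i ≤ j → m ≤ k → k ≤ j → i ≠ k → x i ≠ x k) :
    dd x (fun z => f z * g z) m j
      = ∑ ℓ ∈ Finset.Icc m j, dd x f m ℓ * dd x g ℓ j := by
  have := dd_leibniz_aux x f g (j - m) m (by rw [show m + (j-m) = j from by omega]; exact hd)
  rw [show m + (j-m) = j from by omega] at this
  rw [this]
  refine Finset.sum_nbij' (fun i => m + i) (fun ℓ => ℓ - m) ?_ ?_ ?_ ?_ ?_ <;>
    intros <;> simp_all [Finset.mem_Icc, Finset.mem_range] <;> omega

/-- Multivariate Leibniz rule for divided differences. -/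
theorem dd_multi_leibniz (x : ℕ → ℂ) (N : ℕ) (hN : 1 ≤ N)
    (ℓ₁ ℓ₂ : ℕ) (hℓ : ℓ₁ ≤ ℓ₂)
    (hdist : ∀ i j, ℓ₁ ≤ i → i ≤ ℓ₂ → ℓ₁ ≤ j → j ≤ ℓ₂ → i ≠ j → x i ≠ x j)
    (φ : ℕ → ℂ → ℂ) :
    dd x (fun z => ∏ β ∈ Finset.range N, φ (β + 1) z) ℓ₁ ℓ₂
      = ∑ a ∈ (Fintype.piFinset fun _ : Fin (N + 1) => Finset.Icc ℓ₁ ℓ₂).filter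
          (fun a => a 0 = ℓ₁ ∧ a (Fin.last N) = ℓ₂ ∧
            ∀ i : Fin N, a i.castSucc ≤ a i.succ),
        ∏ β : Fin N, dd x (φ (β + 1)) (a β.castSucc) (a β.succ) := by
  induction N, hN using Nat.le_induction generalizing ℓ₁ ℓ₂ with
  | base =>
    have hset : (Fintype.piFinset fun _ : Fin 2 => Finset.Icc ℓ₁ ℓ₂).filter
        (fun a => a 0 = ℓ₁ ∧ a (Fin.last 1) = ℓ₂ ∧ ∀ i : Fin 1, a i.castSucc ≤ a i.succ)
        = {![ℓ₁, ℓ₂]} := by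
      ext a
      simp only [Finset.mem_filter, Fintype.mem_piFinset, Finset.mem_singleton, Finset.mem_Icc]
      constructor
      · rintro ⟨hbox, h0, h1, _⟩
        funext i
        fin_cases i
        · simpa using h0
        · simpa [Fin.last] using h1
      · rintro rfl
        refine ⟨fun i => ?_, by simp, by simp [Fin.last], fun i => ?_⟩
        · fin_cases i <;> simp [hℓ]
        · fin_cases i <;> simp [hℓ]
    rw [hset, Finset.sum_singleton]
    simp [Fin.prod_univ_one, Finset.prod_range_one]
  | succ N hN ih =>
    have key := dd_leibniz x (fun z => ∏ β ∈ Finset.range N, φ (β+1) z) (φ (N+1)) hℓ hdist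
    have lhs_eq : dd x (fun z => ∏ β ∈ Finset.range (N+1), φ (β + 1) z) ℓ₁ ℓ₂
        = ∑ ℓ ∈ Finset.Icc ℓ₁ ℓ₂,
            dd x (fun z => ∏ β ∈ Finset.range N, φ (β+1) z) ℓ₁ ℓ * dd x (φ (N+1)) ℓ ℓ₂ := by
      rw [← key]; congr 1; funext z; rw [Finset.prod_range_succ]
    rw [lhs_eq]
    have inner : ∀ ℓ ∈ Finset.Icc ℓ₁ ℓ₂,
        dd x (fun z => ∏ β ∈ Finset.range N, φ (β+1) z) ℓ₁ ℓ * dd x (φ (N+1)) ℓ ℓ₂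
          = ∑ a ∈ (Fintype.piFinset fun _ : Fin (N + 1) => Finset.Icc ℓ₁ ℓ).filter
              (fun a => a 0 = ℓ₁ ∧ a (Fin.last N) = ℓ ∧ ∀ i : Fin N, a i.castSucc ≤ a i.succ),
            (∏ β : Fin N, dd x (φ (β + 1)) (a β.castSucc) (a β.succ)) * dd x (φ (N+1)) ℓ ℓ₂ := by
      intro ℓ hℓ'
      simp only [Finset.mem_Icc] at hℓ'
      rw [ih ℓ₁ ℓ hℓ'.1 (fun i j h1 h2 h3 h4 h5 =>
        hdist i j h1 (le_trans h2 hℓ'.2) h3 (le_trans h4 hℓ'.2) h5), Finset.sum_mul]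
    rw [Finset.sum_congr rfl inner, Finset.sum_sigma']
    refine Finset.sum_bij' (fun p _ => Fin.snoc p.2 ℓ₂)
      (fun b _ => ⟨b ((Fin.last N).castSucc), Fin.init b⟩) ?_ ?_ ?_ ?_ ?_
    · rintro ⟨ℓ, a⟩ hp
      simp only [Finset.mem_sigma, Finset.mem_filter, Fintype.mem_piFinset, Finset.mem_Icc] at hp
      obtain ⟨hℓ', hbox, h0, hlast, hchain⟩ := hp
      simp only [Finset.mem_filter, Fintype.mem_piFinset, Finset.mem_Icc]
      refine ⟨fun i => ?_, ?_, ?_, fun i => ?_⟩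
      · refine Fin.lastCases ?_ (fun k => ?_) i
        · rw [Fin.snoc_last]; exact ⟨hℓ, le_rfl⟩
        · rw [Fin.snoc_castSucc]; exact ⟨(hbox k).1, (hbox k).2.trans hℓ'.2⟩
      · rw [show (0 : Fin (N+2)) = Fin.castSucc 0 from rfl, Fin.snoc_castSucc]; exact h0
      · rw [Fin.snoc_last]
      · refine Fin.lastCases ?_ (fun k => ?_) i
        · rw [Fin.succ_last, Fin.snoc_last, Fin.snoc_castSucc, hlast]; exact hℓ'.2
        · rw [Fin.succ_castSucc, Fin.snoc_castSucc, Fin.snoc_castSucc]; exact hchain k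
    · intro b hb
      simp only [Finset.mem_filter, Fintype.mem_piFinset, Finset.mem_Icc] at hb
      obtain ⟨hbox, h0, hlast, hchain⟩ := hb
      have hmono : Monotone b := Fin.monotone_iff_le_succ.mpr hchain
      rw [Finset.mem_sigma]
      constructor
      · rw [Finset.mem_Icc]; exact ⟨(hbox _).1, (hbox _).2⟩
      · rw [Finset.mem_filter]
        refine ⟨Fintype.mem_piFinset.mpr fun i => Finset.mem_Icc.mpr ⟨?_, ?_⟩, ?_, rfl,
          fun k => ?_⟩
        · show ℓ₁ ≤ Fin.init b i
          rw [show Fin.init b i = b i.castSucc from rfl, ← h0]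
          exact hmono (Fin.zero_le _)
        · show Fin.init b i ≤ b (Fin.last N).castSucc
          exact hmono (Fin.castSucc_le_castSucc_iff.mpr (Fin.le_last i))
        · show Fin.init b 0 = ℓ₁
          rw [show Fin.init b 0 = b (Fin.castSucc 0) from rfl, Fin.castSucc_zero]
          exact h0
        · show Fin.init b k.castSucc ≤ Fin.init b k.succ
          rw [show Fin.init b k.castSucc = b k.castSucc.castSucc from rfl,
            show Fin.init b k.succ = b k.succ.castSucc from rfl, ← Fin.succ_castSucc]
          exact hchain k.castSucc
    · rintro ⟨ℓ, a⟩ hp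
      simp only [Finset.mem_sigma, Finset.mem_filter, Fintype.mem_piFinset, Finset.mem_Icc] at hp
      obtain ⟨hℓ', hbox, h0, hlast, hchain⟩ := hp
      simp [Fin.snoc_castSucc, Fin.init_snoc, hlast]
    · intro b hb
      simp only [Finset.mem_filter, Fintype.mem_piFinset, Finset.mem_Icc] at hb
      obtain ⟨hbox, h0, hlast, hchain⟩ := hb
      show Fin.snoc (Fin.init b) ℓ₂ = b
      have h := Fin.snoc_init_self b
      rwa [hlast] at h
    · rintro ⟨ℓ, a⟩ hp
      simp only [Finset.mem_sigma, Finset.mem_filter, Fintype.mem_piFinset, Finset.mem_Icc] at hp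
      obtain ⟨hℓ', hbox, h0, hlast, hchain⟩ := hp
      simp only [Fin.prod_univ_castSucc, Fin.coe_castSucc, Fin.val_last, Fin.succ_castSucc,
        Fin.snoc_castSucc, Fin.succ_last, Fin.snoc_last, hlast]
end
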